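/- arXiv:2403.02233 — 6 statements merged into one kernel-verified Lean document; each statement's English description precedes it below -/
import Mathlib

section
/- Under the single-cluster pointwise setting, let p ∈ ℳ lie in area 𝒫_n. Then the feature–position component of the negative loss gradient satisfies e_pᵀ(−∇_Q ℓ(Q))v_n = A_n(Q) · ( z_n³ (1 − A_n(Q))² + Σ_{a≠n} z_a² z_n A_a(Q)² ), where A_m(Q) = Σ_{q∈𝒰∩𝒫_m} s_{p→q}(Q) is the unmasked area attention of patch p to area 𝒫_m. -/
/-!
Single-cluster pointwise setting (shared context for Statements 2–6 of the paper):

`𝒫 = Fin P` is partitioned into areas `𝒫_1, …, 𝒫_N` via `area : Fin P → Fin N`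
(`𝒫_j = area⁻¹ j`); `v_1, …, v_N ∈ ℝ^d` are pairwise orthogonal unit features;
`z_1, …, z_N ∈ ℝ`; the sample has columns `X_q = z_{area q} v_{area q}`; positional
encodings `e_q` are unit vectors, pairwise orthogonal and orthogonal to every feature;
`ℳ ⊂ 𝒫` is the mask set, `𝒰 = 𝒫 ∖ ℳ`; `Y = mask(X)` zeroes masked columns;
`X̃ = Y + E`; `s_{p→q}(Q)` is the softmax attention on `X̃`;
`F_p(Q) = Σ_q s_{p→q}(Q) Y_q`; `ℓ(Q) = (1/2) Σ_{p∈ℳ} ‖F_p(Q) − X_p‖²`;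
`A_m(Q) = Σ_{q ∈ 𝒰 ∩ 𝒫_m} s_{p→q}(Q)` is the unmasked area attention.

The gradient identities `e_pᵀ(−∇_Q ℓ)v` and `e_pᵀ(−∇_Q ℓ)e_q` are expressed via the
Fréchet derivative of `ℓ` paired against the rank-one directions `e_p vᵀ` resp. `e_p e_qᵀ`
(for a matrix `M` one has `aᵀ M b = ⟨M, a bᵀ⟩_F`).
-/

noncomputable section

open Finset

variable {d P N : ℕ}

/-- The sample: patch `q` carries content `z_{area q} · v_{area q}`. -/
def Xcol (area : Fin P → Fin N) (v : Fin N → Fin d → ℝ) (z : Fin N → ℝ) :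
    Fin P → Fin d → ℝ :=
  fun q i => z (area q) * v (area q) i

/-- Masked sample: masked patches are set to the value `0`. -/
def Ycol (M : Finset (Fin P)) (X : Fin P → Fin d → ℝ) : Fin P → Fin d → ℝ :=
  fun q i => if q ∈ M then 0 else X q i

/-- Positional-encoding-augmented input `X̃ = Y + E`. -/
def XtCol (e Y : Fin P → Fin d → ℝ) : Fin P → Fin d → ℝ :=
  fun q i => Y q i + e q i

/-- Softmax attention score `s_{p→q}(Q)` computed on the augmented inputs `X̃`. -/
def attScore (Xt : Fin P → Fin d → ℝ) (Q : Fin d → Fin d → ℝ) (p q : Fin P) : ℝ :=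
  Real.exp (∑ i, ∑ j, Xt p i * Q i j * Xt q j) /
    ∑ r, Real.exp (∑ i, ∑ j, Xt p i * Q i j * Xt r j)

/-- Transformer output at patch `p`: `F_p(Q) = Σ_q s_{p→q}(Q) · Y_q`. -/
def Fout (Xt Y : Fin P → Fin d → ℝ) (Q : Fin d → Fin d → ℝ) (p : Fin P) :
    Fin d → ℝ :=
  fun i => ∑ q, attScore Xt Q p q * Y q i

/-- Per-sample masked reconstruction loss `ℓ(Q) = (1/2) Σ_{p∈ℳ} ‖F_p(Q) − X_p‖²`. -/
def maeLoss (M : Finset (Fin P)) (X Xt Y : Fin P → Fin d → ℝ)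
    (Q : Fin d → Fin d → ℝ) : ℝ :=
  (1 / 2) * ∑ p ∈ M, ∑ i, (Fout Xt Y Q p i - X p i) ^ 2

/-- Unmasked area attention `A_j(Q) = Σ_{q ∈ 𝒰 ∩ 𝒫_j} s_{p→q}(Q)` of patch `p` to area `j`. -/
def areaAttn (area : Fin P → Fin N) (M : Finset (Fin P)) (Xt : Fin P → Fin d → ℝ)
    (Q : Fin d → Fin d → ℝ) (p : Fin P) (j : Fin N) : ℝ :=
  ∑ q ∈ Finset.univ.filter (fun q => q ∉ M ∧ area q = j), attScore Xt Q p q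

/-! ### Auxiliary machinery for computing the gradient -/

/-- The continuous linear map `Q ↦ ∑ i, ∑ j, c i * Q i j * r j`. -/
def Bclm (c r : Fin d → ℝ) : (Fin d → Fin d → ℝ) →L[ℝ] ℝ :=
  ∑ i, ∑ j, (c i * r j) • ((ContinuousLinearMap.proj j).comp
    (ContinuousLinearMap.proj (R := ℝ) (φ := fun _ : Fin d => Fin d → ℝ) i))

lemma Bclm_apply (c r : Fin d → ℝ) (H : Fin d → Fin d → ℝ) :
    Bclm c r H = ∑ i, ∑ j, c i * H i j * r j := by
  simp only [Bclm, ContinuousLinearMap.coe_sum', Finset.sum_apply,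
    ContinuousLinearMap.smul_apply, ContinuousLinearMap.comp_apply,
    ContinuousLinearMap.proj_apply, smul_eq_mul]
  exact Finset.sum_congr rfl fun i _ => Finset.sum_congr rfl fun j _ => by ring

lemma hasFDerivAt_B (c r : Fin d → ℝ) (Q : Fin d → Fin d → ℝ) :
    HasFDerivAt (fun Q : Fin d → Fin d → ℝ => ∑ i, ∑ j, c i * Q i j * r j)
      (Bclm c r) Q := by
  have h : (fun Q : Fin d → Fin d → ℝ => ∑ i, ∑ j, c i * Q i j * r j) = Bclm c r :=
    funext fun Q => (Bclm_apply c r Q).symm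
  rw [h]
  exact (Bclm c r).hasFDerivAt

/-- Derivative of the attention score `Q ↦ s_{p→q}(Q)`. -/
def sD (Xt : Fin P → Fin d → ℝ) (Q : Fin d → Fin d → ℝ) (p q : Fin P) :
    (Fin d → Fin d → ℝ) →L[ℝ] ℝ :=
  attScore Xt Q p q • (Bclm (Xt p) (Xt q) - ∑ r, attScore Xt Q p r • Bclm (Xt p) (Xt r))

set_option maxHeartbeats 2000000 in
lemma hasFDerivAt_att (Xt : Fin P → Fin d → ℝ) (Q : Fin d → Fin d → ℝ) (p q : Fin P) :
    HasFDerivAt (fun Q => attScore Xt Q p q) (sD Xt Q p q) Q := by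
  classical
  set E : Fin P → (Fin d → Fin d → ℝ) → ℝ :=
    fun r Q => Real.exp (∑ i, ∑ j, Xt p i * Q i j * Xt r j) with hE_def
  have hE : ∀ r, HasFDerivAt (E r) (E r Q • Bclm (Xt p) (Xt r)) Q :=
    fun r => (hasFDerivAt_B (Xt p) (Xt r) Q).exp
  have hD : HasFDerivAt (fun Q => ∑ r, E r Q) (∑ r, E r Q • Bclm (Xt p) (Xt r)) Q :=
    HasFDerivAt.fun_sum fun r _ => hE r
  have hDpos : 0 < ∑ r, E r Q :=
    Finset.sum_pos (fun r _ => Real.exp_pos _) ⟨q, Finset.mem_univ q⟩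
  have hDne : (∑ r, E r Q) ≠ 0 := ne_of_gt hDpos
  have hinv : HasFDerivAt (fun Q => (∑ r, E r Q)⁻¹)
      ((-ContinuousLinearMap.mulLeftRight ℝ ℝ (∑ r, E r Q)⁻¹ (∑ r, E r Q)⁻¹).comp
        (∑ r, E r Q • Bclm (Xt p) (Xt r))) Q :=
    (hasFDerivAt_inv' hDne).comp Q hD
  have hmul := (hE q).mul hinv
  have hfun : (fun Q => attScore Xt Q p q) = fun Q => E q Q * (∑ r, E r Q)⁻¹ := by
    funext Q'
    simp only [attScore, hE_def, div_eq_mul_inv]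
  rw [hfun]
  refine hmul.congr_fderiv ?_
  ext H
  have happ : ∀ r, attScore Xt Q p r = E r Q / (∑ r', E r' Q) := fun r => rfl
  simp only [sD, ContinuousLinearMap.smul_apply, ContinuousLinearMap.sub_apply,
    ContinuousLinearMap.add_apply, ContinuousLinearMap.sum_apply,
    ContinuousLinearMap.comp_apply, ContinuousLinearMap.neg_apply,
    ContinuousLinearMap.mulLeftRight_apply, smul_eq_mul, happ]
  have hsum : ∑ r, E r Q / (∑ r', E r' Q) * Bclm (Xt p) (Xt r) H
      = (∑ r, E r Q * Bclm (Xt p) (Xt r) H) / (∑ r', E r' Q) := by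
    rw [Finset.sum_div]
    exact Finset.sum_congr rfl fun r _ => by ring
  rw [hsum]
  field_simp
  ring

set_option maxHeartbeats 2000000 in
lemma fderiv_maeLoss_apply (M : Finset (Fin P)) (X Xt Y : Fin P → Fin d → ℝ)
    (Q H : Fin d → Fin d → ℝ) :
    fderiv ℝ (maeLoss M X Xt Y) Q H =
      ∑ p' ∈ M, ∑ i, (Fout Xt Y Q p' i - X p' i) * (∑ q, Y q i * sD Xt Q p' q H) := by
  classical
  have hF : ∀ (p' : Fin P) (i : Fin d),
      HasFDerivAt (fun Q => Fout Xt Y Q p' i) (∑ q, Y q i • sD Xt Q p' q) Q := by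
    intro p' i
    exact HasFDerivAt.fun_sum fun q _ => (hasFDerivAt_att Xt Q p' q).mul_const (Y q i)
  have hsq : ∀ (p' : Fin P) (i : Fin d),
      HasFDerivAt (fun Q => (Fout Xt Y Q p' i - X p' i) ^ 2)
        ((2 * (Fout Xt Y Q p' i - X p' i)) • (∑ q, Y q i • sD Xt Q p' q)) Q := by
    intro p' i
    have h1 := (hF p' i).sub_const (X p' i)
    have h2 := h1.mul h1
    have hfn : (fun Q => (Fout Xt Y Q p' i - X p' i) ^ 2)
        = fun Q => (Fout Xt Y Q p' i - X p' i) * (Fout Xt Y Q p' i - X p' i) := by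
      funext Q'; ring
    rw [hfn, two_mul, add_smul]
    exact h2
  have hl : HasFDerivAt (maeLoss M X Xt Y)
      ((1 / 2 : ℝ) • ∑ p' ∈ M, ∑ i,
        (2 * (Fout Xt Y Q p' i - X p' i)) • (∑ q, Y q i • sD Xt Q p' q)) Q := by
    unfold maeLoss
    exact HasFDerivAt.const_mul
      (HasFDerivAt.fun_sum fun p' _ => HasFDerivAt.fun_sum fun i _ => hsq p' i) (1 / 2)
  rw [hl.fderiv]
  simp only [ContinuousLinearMap.smul_apply, ContinuousLinearMap.sum_apply, smul_eq_mul]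
  rw [Finset.mul_sum]
  refine Finset.sum_congr rfl fun p' _ => ?_
  rw [Finset.mul_sum]
  refine Finset.sum_congr rfl fun i _ => ?_
  ring

set_option maxHeartbeats 2000000 in
/-- for a masked patch `p` in area `𝒫_n`,
`e_pᵀ(−∇_Q ℓ(Q))v_n = A_n(Q)·(z_n³(1−A_n(Q))² + Σ_{a≠n} z_a² z_n A_a(Q)²)`. -/
theorem fp_gradient_same_area (area : Fin P → Fin N) (v : Fin N → Fin d → ℝ)
    (z : Fin N → ℝ) (e : Fin P → Fin d → ℝ)
    (hv_unit : ∀ n, ∑ i, v n i ^ 2 = 1)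
    (hv_orth : ∀ n n', n ≠ n' → ∑ i, v n i * v n' i = 0)
    (he_unit : ∀ p, ∑ i, e p i ^ 2 = 1)
    (he_orth : ∀ p q, p ≠ q → ∑ i, e p i * e q i = 0)
    (hev : ∀ p n, ∑ i, e p i * v n i = 0)
    (M : Finset (Fin P)) (Q : Fin d → Fin d → ℝ)
    (p : Fin P) (hp : p ∈ M) (n : Fin N) (hn : area p = n) :
    (let X := Xcol area v z;
     let Y := Ycol M X;
     let Xt := XtCol e Y;
     let A := areaAttn area M Xt Q p;
     -(fderiv ℝ (maeLoss M X Xt Y) Q (fun i j => e p i * v n j)) =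
       A n * (z n ^ 3 * (1 - A n) ^ 2 +
         ∑ a ∈ Finset.univ \ {n}, z a ^ 2 * z n * A a ^ 2)) := by
  classical
  dsimp only
  set X := Xcol area v z with hX_def
  set Y := Ycol M X with hY_def
  set Xt := XtCol e Y with hXt_def
  set H : Fin d → Fin d → ℝ := fun i j => e p i * v n j with hH_def
  set A := areaAttn area M Xt Q p with hA_def
  have hYdef : ∀ q i, Y q i = if q ∈ M then 0 else z (area q) * v (area q) i :=
    fun q i => rfl
  have hXtdef : ∀ q i, Xt q i = Y q i + e q i := fun q i => rfl
  -- inner products of rows of X̃ with e p and with v n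
  have fact1 : ∀ p', (∑ i, Xt p' i * e p i) = if p' = p then 1 else 0 := by
    intro p'
    have h1 : ∀ i, Xt p' i * e p i = Y p' i * e p i + e p' i * e p i := fun i => by
      rw [hXtdef]; ring
    rw [Finset.sum_congr rfl fun i _ => h1 i, Finset.sum_add_distrib]
    have hY0 : (∑ i, Y p' i * e p i) = 0 := by
      by_cases hm : p' ∈ M
      · simp [hYdef, hm]
      · have h2 : ∀ i, Y p' i * e p i = z (area p') * (e p i * v (area p') i) := fun i => by
          rw [hYdef]; rw [if_neg hm]; ring
        rw [Finset.sum_congr rfl fun i _ => h2 i, ← Finset.mul_sum, hev p (area p'), mul_zero]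
    rw [hY0, zero_add]
    by_cases hpp : p' = p
    · subst hpp
      rw [if_pos rfl]
      simpa [pow_two] using he_unit p'
    · rw [if_neg hpp]
      exact he_orth p' p hpp
  have fact2 : ∀ q, (∑ j, v n j * Xt q j) = if q ∉ M ∧ area q = n then z n else 0 := by
    intro q
    have h1 : ∀ j, v n j * Xt q j = v n j * Y q j + e q j * v n j := fun j => by
      rw [hXtdef]; ring
    rw [Finset.sum_congr rfl fun j _ => h1 j, Finset.sum_add_distrib, hev q n, add_zero]
    by_cases hm : q ∈ M
    · simp [hYdef, hm]
    · have h2 : ∀ j, v n j * Y q j = z (area q) * (v n j * v (area q) j) := fun j => by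
        rw [hYdef, if_neg hm]; ring
      rw [Finset.sum_congr rfl fun j _ => h2 j, ← Finset.mul_sum]
      by_cases ha : area q = n
      · rw [if_pos ⟨hm, ha⟩, ha]
        have h3 : (∑ j, v n j * v n j) = 1 := by simpa [pow_two] using hv_unit n
        rw [h3, mul_one]
      · rw [if_neg (fun h => ha h.2), hv_orth n (area q) (fun h => ha h.symm), mul_zero]
  have fact0 : ∀ p' q',
      Bclm (Xt p') (Xt q') H = (∑ i, Xt p' i * e p i) * (∑ j, v n j * Xt q' j) := by
    intro p' q'
    rw [Bclm_apply, Finset.sum_mul_sum]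
    exact Finset.sum_congr rfl fun i _ => Finset.sum_congr rfl fun j _ => by
      rw [hH_def]; ring
  have sDapp : ∀ p' q', sD Xt Q p' q' H = attScore Xt Q p' q' *
      ((∑ i, Xt p' i * e p i) * (∑ j, v n j * Xt q' j)
        - ∑ r, attScore Xt Q p' r * ((∑ i, Xt p' i * e p i) * (∑ j, v n j * Xt r j))) := by
    intro p' q'
    simp only [sD, ContinuousLinearMap.smul_apply, ContinuousLinearMap.sub_apply,
      ContinuousLinearMap.coe_sum', Finset.sum_apply, smul_eq_mul, fact0]
  have hz0 : ∀ p' ∈ M, p' ≠ p →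
      (∑ i, (Fout Xt Y Q p' i - X p' i) * (∑ q, Y q i * sD Xt Q p' q H)) = 0 := by
    intro p' _ hne
    have hzero : ∀ q', sD Xt Q p' q' H = 0 := by
      intro q'
      rw [sDapp, fact1, if_neg hne]
      simp
    simp [hzero]
  rw [fderiv_maeLoss_apply, Finset.sum_eq_single_of_mem p hp hz0]
  -- the fibers over areas
  have hA : ∀ a, A a = ∑ q ∈ Finset.univ.filter (fun q => q ∉ M ∧ area q = a),
      attScore Xt Q p q := fun a => rfl
  have sDp : ∀ q', sD Xt Q p q' H
      = attScore Xt Q p q' * ((if q' ∉ M ∧ area q' = n then z n else 0) - z n * A n) := by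
    intro q'
    rw [sDapp, fact1, if_pos rfl, fact2, one_mul]
    have hsum : (∑ r, attScore Xt Q p r * (1 * (∑ j, v n j * Xt r j))) = z n * A n := by
      have h4 : ∀ r, attScore Xt Q p r * (1 * (∑ j, v n j * Xt r j))
          = if r ∉ M ∧ area r = n then attScore Xt Q p r * z n else 0 := by
        intro r
        rw [one_mul, fact2]
        split <;> simp
      rw [Finset.sum_congr rfl fun r _ => h4 r, ← Finset.sum_filter, ← Finset.sum_mul,
        ← hA]
      ring
    rw [hsum]
  have keyfib : ∀ (f : Fin P → ℝ) (i : Fin d),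
      (∑ q, Y q i * f q) = ∑ a, (z a * ∑ q ∈ Finset.univ.filter (fun q => q ∉ M ∧ area q = a), f q) * v a i := by
    intro f i
    have step1 : (∑ q, Y q i * f q)
        = ∑ q ∈ Finset.univ.filter (fun q => q ∉ M),
            f q * (z (area q) * v (area q) i) := by
      rw [Finset.sum_filter]
      refine Finset.sum_congr rfl fun q _ => ?_
      by_cases hm : q ∈ M
      · simp [hYdef, hm]
      · rw [if_pos hm, hYdef, if_neg hm]; ring
    rw [step1, ← Finset.sum_fiberwise (Finset.univ.filter (fun q => q ∉ M)) area
      (fun q => f q * (z (area q) * v (area q) i))]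
    refine Finset.sum_congr rfl fun a _ => ?_
    rw [Finset.filter_filter]
    have hcg : ∀ q ∈ Finset.univ.filter (fun q => q ∉ M ∧ area q = a),
        f q * (z (area q) * v (area q) i) = f q * (z a * v a i) := by
      intro q hq
      rcases Finset.mem_filter.mp hq with ⟨-, -, ha⟩
      rw [ha]
    rw [Finset.sum_congr rfl hcg, Finset.mul_sum, Finset.sum_mul]
    exact Finset.sum_congr rfl fun q _ => by ring
  have hFout : ∀ i, Fout Xt Y Q p i = ∑ a, (z a * A a) * v a i := by
    intro i
    have h5 : Fout Xt Y Q p i = ∑ q, Y q i * attScore Xt Q p q := by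
      simp only [Fout]
      exact Finset.sum_congr rfl fun q _ => by ring
    rw [h5, keyfib]
    exact Finset.sum_congr rfl fun a _ => by rw [← hA]
  have hXp : ∀ i, X p i = ∑ a, (if a = n then z n else 0) * v a i := by
    intro i
    have h6 : X p i = z n * v n i := by
      rw [hX_def]; simp only [Xcol, hn]
    rw [h6]
    symm
    rw [Finset.sum_eq_single_of_mem n (Finset.mem_univ n)
      (fun b _ hb => by rw [if_neg hb, zero_mul]), if_pos rfl]
  have hinner : ∀ i, (∑ q, Y q i * sD Xt Q p q H)
      = ∑ a, (z a * (A a * ((if a = n then z n else 0) - z n * A n))) * v a i := by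
    intro i
    rw [Finset.sum_congr rfl fun q (_ : q ∈ Finset.univ) => by rw [sDp q],
      keyfib (fun q => attScore Xt Q p q * ((if q ∉ M ∧ area q = n then z n else 0) - z n * A n)) i]
    refine Finset.sum_congr rfl fun a _ => ?_
    have h7 : ∀ q ∈ Finset.univ.filter (fun q => q ∉ M ∧ area q = a),
        attScore Xt Q p q * ((if q ∉ M ∧ area q = n then z n else 0) - z n * A n)
          = attScore Xt Q p q * ((if a = n then z n else 0) - z n * A n) := by
      intro q hq
      rcases Finset.mem_filter.mp hq with ⟨-, hm, ha⟩
      by_cases h : a = n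
      · rw [if_pos h, if_pos ⟨hm, ha.trans h⟩]
      · rw [if_neg h, if_neg (fun hc => h (ha.symm.trans hc.2))]
    rw [Finset.sum_congr rfl h7, ← Finset.sum_mul, ← hA]
  have orth : ∀ (c c' : Fin N → ℝ),
      (∑ i, (∑ a, c a * v a i) * (∑ b, c' b * v b i)) = ∑ a, c a * c' a := by
    intro c c'
    rw [Finset.sum_congr rfl fun i (_ : i ∈ Finset.univ) =>
      Finset.sum_mul_sum Finset.univ Finset.univ (fun a => c a * v a i) (fun b => c' b * v b i)]
    rw [Finset.sum_comm]
    refine Finset.sum_congr rfl fun a _ => ?_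
    rw [Finset.sum_comm]
    have hib : ∀ b, (∑ i, (c a * v a i) * (c' b * v b i))
        = c a * c' b * (∑ i, v a i * v b i) := by
      intro b
      rw [Finset.mul_sum]
      exact Finset.sum_congr rfl fun i _ => by ring
    rw [Finset.sum_congr rfl fun b _ => hib b]
    have hdelta : ∀ b, c a * c' b * (∑ i, v a i * v b i)
        = if b = a then c a * c' b else 0 := by
      intro b
      by_cases h : b = a
      · subst h
        rw [if_pos rfl]
        have : (∑ i, v b i * v b i) = 1 := by simpa [pow_two] using hv_unit b
        rw [this, mul_one]
      · rw [if_neg h, hv_orth a b (fun hh => h hh.symm), mul_zero]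
    rw [Finset.sum_congr rfl fun b _ => hdelta b]
    simp
  have hcomb : (∑ i, (Fout Xt Y Q p i - X p i) * (∑ q, Y q i * sD Xt Q p q H))
      = ∑ a, (z a * A a - (if a = n then z n else 0))
          * (z a * (A a * ((if a = n then z n else 0) - z n * A n))) := by
    have hsub : ∀ i, Fout Xt Y Q p i - X p i
        = ∑ a, (z a * A a - (if a = n then z n else 0)) * v a i := by
      intro i
      rw [hFout i, hXp i, ← Finset.sum_sub_distrib]
      exact Finset.sum_congr rfl fun a _ => (sub_mul _ _ _).symm
    rw [Finset.sum_congr rfl fun i (_ : i ∈ Finset.univ) => by rw [hsub i, hinner i]]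
    exact orth _ _
  rw [hcomb, Finset.sum_eq_sum_sdiff_singleton_add (Finset.mem_univ n), if_pos rfl,
    neg_add, mul_add, add_comm]
  congr 1
  · ring
  · rw [Finset.mul_sum, ← Finset.sum_neg_distrib]
    refine Finset.sum_congr rfl fun a ha => ?_
    have hane : a ≠ n := fun h => (Finset.mem_sdiff.mp ha).2 (Finset.mem_singleton.mpr h)
    rw [if_neg hane]
    ring
end
end

section
/- Under the single-cluster pointwise setting, let p ∈ ℳ lie in area 𝒫_n, and let m ∈ {1,…,N} with m ≠ n. Then e_pᵀ(−∇_Q ℓ(Q))v_m = A_m(Q) · ( Σ_{a≠m,n} z_a² z_m A_a(Q)² − ( z_m z_n² (1 − A_n(Q)) A_n(Q) + z_m³ (1 − A_m(Q)) A_m(Q) ) ), where A_j(Q) = Σ_{q∈𝒰∩𝒫_j} s_{p→q}(Q). -/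
/-!
Single-cluster pointwise setting (shared context for Statements 2–6 of the paper):

`𝒫 = Fin P` is partitioned into areas `𝒫_1, …, 𝒫_N` via `area : Fin P → Fin N`
(`𝒫_j = area⁻¹ j`); `v_1, …, v_N ∈ ℝ^d` are pairwise orthogonal unit features;
`z_1, …, z_N ∈ ℝ`; the sample has columns `X_q = z_{area q} v_{area q}`; positional
encodings `e_q` are unit vectors, pairwise orthogonal and orthogonal to every feature;
`ℳ ⊂ 𝒫` is the mask set, `𝒰 = 𝒫 ∖ ℳ`; `Y = mask(X)` zeroes masked columns;
`X̃ = Y + E`; `s_{p→q}(Q)` is the softmax attention on `X̃`;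
`F_p(Q) = Σ_q s_{p→q}(Q) Y_q`; `ℓ(Q) = (1/2) Σ_{p∈ℳ} ‖F_p(Q) − X_p‖²`;
`A_m(Q) = Σ_{q ∈ 𝒰 ∩ 𝒫_m} s_{p→q}(Q)` is the unmasked area attention.

The gradient identities `e_pᵀ(−∇_Q ℓ)v` and `e_pᵀ(−∇_Q ℓ)e_q` are expressed via the
Fréchet derivative of `ℓ` paired against the rank-one directions `e_p vᵀ` resp. `e_p e_qᵀ`
(for a matrix `M` one has `aᵀ M b = ⟨M, a bᵀ⟩_F`).
-/

noncomputable section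

open Finset

variable {d P N : ℕ}

lemma bilin_hasDerivAt (Xt : Fin P → Fin d → ℝ) (Q H : Fin d → Fin d → ℝ) (p q : Fin P) :
    HasDerivAt (fun t : ℝ => ∑ i, ∑ j, Xt p i * (Q + t • H) i j * Xt q j)
      (∑ i, ∑ j, Xt p i * H i j * Xt q j) 0 := by
  apply HasDerivAt.fun_sum; intro i _
  apply HasDerivAt.fun_sum; intro j _
  have h1 : HasDerivAt (fun t : ℝ => (Q + t • H) i j) (H i j) 0 := by
    simp only [Pi.add_apply, Pi.smul_apply, smul_eq_mul]
    simpa using ((hasDerivAt_id (0:ℝ)).mul_const (H i j)).const_add (Q i j)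
  exact (h1.const_mul (Xt p i)).mul_const (Xt q j)

lemma bilin_diff (Xt : Fin P → Fin d → ℝ) (Q : Fin d → Fin d → ℝ) (p q : Fin P) :
    DifferentiableAt ℝ (fun Q : Fin d → Fin d → ℝ => ∑ i, ∑ j, Xt p i * Q i j * Xt q j) Q := by
  apply DifferentiableAt.fun_sum; intro i _
  apply DifferentiableAt.fun_sum; intro j _
  have hij : DifferentiableAt ℝ (fun Q : Fin d → Fin d → ℝ => Q i j) Q :=
    ((ContinuousLinearMap.proj (R := ℝ) (φ := fun _ : Fin d => ℝ) j).comp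
      (ContinuousLinearMap.proj (R := ℝ) (φ := fun _ : Fin d => Fin d → ℝ) i)).differentiableAt
  exact ((differentiableAt_const _).mul hij).mul (differentiableAt_const _)

lemma den_pos (Xt : Fin P → Fin d → ℝ) (Q : Fin d → Fin d → ℝ) (p q : Fin P) :
    0 < ∑ r, Real.exp (∑ i, ∑ j, Xt p i * Q i j * Xt r j) :=
  Finset.sum_pos (fun r _ => Real.exp_pos _) ⟨q, mem_univ q⟩

lemma attScore_diff (Xt : Fin P → Fin d → ℝ) (Q : Fin d → Fin d → ℝ) (p q : Fin P) :
    DifferentiableAt ℝ (fun Q => attScore Xt Q p q) Q := by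
  simp only [attScore]
  simp only [div_eq_mul_inv]
  exact (bilin_diff Xt Q p q).exp.mul
    ((DifferentiableAt.fun_sum fun r _ => (bilin_diff Xt Q p r).exp).inv (den_pos Xt Q p q).ne')

lemma attScore_hasDerivAt (Xt : Fin P → Fin d → ℝ) (Q H : Fin d → Fin d → ℝ) (p q : Fin P) :
    HasDerivAt (fun t : ℝ => attScore Xt (Q + t • H) p q)
      (attScore Xt Q p q * ((∑ i, ∑ j, Xt p i * H i j * Xt q j)
        - ∑ r, attScore Xt Q p r * (∑ i, ∑ j, Xt p i * H i j * Xt r j))) 0 := by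
  have key : ∀ q' : Fin P, HasDerivAt
      (fun t : ℝ => Real.exp (∑ i, ∑ j, Xt p i * (Q + t • H) i j * Xt q' j))
      (Real.exp (∑ i, ∑ j, Xt p i * Q i j * Xt q' j) * (∑ i, ∑ j, Xt p i * H i j * Xt q' j)) 0 := by
    intro q'
    have := (bilin_hasDerivAt Xt Q H p q').exp
    simpa using this
  have hden : HasDerivAt (fun t : ℝ => ∑ r, Real.exp (∑ i, ∑ j, Xt p i * (Q + t • H) i j * Xt r j))
      (∑ r, Real.exp (∑ i, ∑ j, Xt p i * Q i j * Xt r j) * (∑ i, ∑ j, Xt p i * H i j * Xt r j)) 0 :=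
    HasDerivAt.fun_sum fun r _ => key r
  have hne : (fun t : ℝ => ∑ r, Real.exp (∑ i, ∑ j, Xt p i * (Q + t • H) i j * Xt r j)) 0 ≠ 0 := by
    simpa using (den_pos Xt Q p q).ne'
  have hdiv := (key q).div hden hne
  show HasDerivAt (fun t : ℝ => Real.exp (∑ i, ∑ j, Xt p i * (Q + t • H) i j * Xt q j) /
      ∑ r, Real.exp (∑ i, ∑ j, Xt p i * (Q + t • H) i j * Xt r j)) _ 0
  convert hdiv using 1
  · rfl
  · rfl
  · rfl
  simp only [zero_smul, add_zero]
  set E : Fin P → ℝ := fun q' => Real.exp (∑ i, ∑ j, Xt p i * Q i j * Xt q' j) with hE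
  set b : Fin P → ℝ := fun q' => ∑ i, ∑ j, Xt p i * H i j * Xt q' j with hb
  have hDen : (0:ℝ) < ∑ r, E r := den_pos Xt Q p q
  simp only [attScore, ← hE, ← hb]
  have h1 : ∑ r, E r / (∑ r, E r) * b r = (∑ r, E r * b r) / (∑ r, E r) := by
    rw [Finset.sum_div]; exact Finset.sum_congr rfl fun r _ => by ring
  rw [h1]
  field_simp
  ring

lemma maeLoss_diff (M : Finset (Fin P)) (X Xt Y : Fin P → Fin d → ℝ) (Q : Fin d → Fin d → ℝ) :
    DifferentiableAt ℝ (maeLoss M X Xt Y) Q := by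
  show DifferentiableAt ℝ (fun Q => (1 / 2 : ℝ) * ∑ p ∈ M, ∑ i, (Fout Xt Y Q p i - X p i) ^ 2) Q
  apply DifferentiableAt.const_mul
  apply DifferentiableAt.fun_sum; intro p' _
  apply DifferentiableAt.fun_sum; intro i _
  apply DifferentiableAt.pow
  apply DifferentiableAt.sub_const
  show DifferentiableAt ℝ (fun Q => ∑ q, attScore Xt Q p' q * Y q i) Q
  exact DifferentiableAt.fun_sum fun q _ => (attScore_diff Xt Q p' q).mul_const _

lemma maeLoss_fderiv (M : Finset (Fin P)) (X Xt Y : Fin P → Fin d → ℝ) (Q H : Fin d → Fin d → ℝ) :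
    fderiv ℝ (maeLoss M X Xt Y) Q H =
      ∑ p' ∈ M, ∑ i, ((∑ q, attScore Xt Q p' q * Y q i) - X p' i) *
        (∑ q, attScore Xt Q p' q * ((∑ i', ∑ j, Xt p' i' * H i' j * Xt q j)
          - ∑ r, attScore Xt Q p' r * (∑ i', ∑ j, Xt p' i' * H i' j * Xt r j)) * Y q i) := by
  have hdiff := maeLoss_diff M X Xt Y Q
  have hQ : HasDerivAt (fun t : ℝ => Q + t • H) H 0 := by
    simpa using ((hasDerivAt_id (0:ℝ)).smul_const H).const_add Q
  have h0 : Q + (0:ℝ) • H = Q := by simp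
  have hf' : HasFDerivAt (maeLoss M X Xt Y) (fderiv ℝ (maeLoss M X Xt Y) Q)
      ((fun t : ℝ => Q + t • H) 0) := by
    simpa [h0] using hdiff.hasFDerivAt
  have hline : HasDerivAt (fun t : ℝ => maeLoss M X Xt Y (Q + t • H))
      (fderiv ℝ (maeLoss M X Xt Y) Q H) 0 := by
    have := hf'.comp_hasDerivAt 0 hQ; exact this
  have hF : ∀ (p' : Fin P) (i : Fin d),
      HasDerivAt (fun t : ℝ => ∑ q, attScore Xt (Q + t • H) p' q * Y q i)
        (∑ q, attScore Xt Q p' q * ((∑ i', ∑ j, Xt p' i' * H i' j * Xt q j)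
          - ∑ r, attScore Xt Q p' r * (∑ i', ∑ j, Xt p' i' * H i' j * Xt r j)) * Y q i) 0 :=
    fun p' i => HasDerivAt.fun_sum fun q _ => (attScore_hasDerivAt Xt Q H p' q).mul_const _
  have hD := HasDerivAt.const_mul ((1:ℝ)/2)
    (HasDerivAt.fun_sum (u := M) fun p' _ => HasDerivAt.fun_sum (u := (univ : Finset (Fin d)))
      fun i _ => ((hF p' i).sub_const (X p' i)).pow 2)
  have hEq := hline.unique hD
  rw [hEq]
  simp only [zero_smul, add_zero, pow_one]
  rw [Finset.mul_sum]
  refine Finset.sum_congr rfl fun p' _ => ?_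
  rw [Finset.mul_sum]
  refine Finset.sum_congr rfl fun i _ => ?_
  ring


/-- for a masked patch `p` in area `𝒫_n` and `m ≠ n`,
`e_pᵀ(−∇_Q ℓ(Q))v_m = A_m(Q)·(Σ_{a≠m,n} z_a² z_m A_a(Q)²
  − (z_m z_n²(1−A_n(Q))A_n(Q) + z_m³(1−A_m(Q))A_m(Q)))`. -/
theorem fp_gradient_other_area (area : Fin P → Fin N) (v : Fin N → Fin d → ℝ)
    (z : Fin N → ℝ) (e : Fin P → Fin d → ℝ)
    (hv_unit : ∀ n, ∑ i, v n i ^ 2 = 1)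
    (hv_orth : ∀ n n', n ≠ n' → ∑ i, v n i * v n' i = 0)
    (he_unit : ∀ p, ∑ i, e p i ^ 2 = 1)
    (he_orth : ∀ p q, p ≠ q → ∑ i, e p i * e q i = 0)
    (hev : ∀ p n, ∑ i, e p i * v n i = 0)
    (M : Finset (Fin P)) (Q : Fin d → Fin d → ℝ)
    (p : Fin P) (hp : p ∈ M) (n : Fin N) (hn : area p = n)
    (m : Fin N) (hm : m ≠ n) :
    (let X := Xcol area v z;
     let Y := Ycol M X;
     let Xt := XtCol e Y;
     let A := areaAttn area M Xt Q p;
     -(fderiv ℝ (maeLoss M X Xt Y) Q (fun i j => e p i * v m j)) =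
       A m * ((∑ a ∈ Finset.univ \ {m, n}, z a ^ 2 * z m * A a ^ 2) -
         (z m * z n ^ 2 * (1 - A n) * A n + z m ^ 3 * (1 - A m) * A m))) := by
  intro X Y Xt A
  set H : Fin d → Fin d → ℝ := fun i j => e p i * v m j with hH
  -- basic pointwise facts
  have hY0 : ∀ q ∈ M, ∀ i, Y q i = 0 := by
    intro q hq i; show (if q ∈ M then 0 else X q i) = 0; rw [if_pos hq]
  have hY1 : ∀ q, q ∉ M → ∀ i, Y q i = z (area q) * v (area q) i := by
    intro q hq i; show (if q ∈ M then 0 else X q i) = _; rw [if_neg hq]; rfl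
  have hvv : ∀ a : Fin N, ∑ j, v a j * v a j = 1 := by
    intro a; have := hv_unit a; simpa [pow_two] using this
  have hee : ∑ i, e p i * e p i = 1 := by
    have := he_unit p; simpa [pow_two] using this
  -- dot products
  have hwY : ∀ (a : Fin N) (q : Fin P), (∑ j, Y q j * v a j)
      = if q ∉ M ∧ area q = a then z a else 0 := by
    intro a q
    by_cases hq : q ∈ M
    · simp [hY0 q hq, hq]
    · have h1 : ∑ j, Y q j * v a j = z (area q) * ∑ j, v (area q) j * v a j := by
        rw [Finset.mul_sum]
        exact Finset.sum_congr rfl fun j _ => by rw [hY1 q hq j]; ring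
      rw [h1]
      by_cases ha : area q = a
      · rw [ha, hvv a, if_pos ⟨hq, rfl⟩, mul_one]
      · rw [hv_orth _ _ ha, if_neg (fun h => ha h.2), mul_zero]
  have hw : ∀ (a : Fin N) (q : Fin P), (∑ j, Xt q j * v a j)
      = if q ∉ M ∧ area q = a then z a else 0 := by
    intro a q
    have h1 : ∀ j, Xt q j * v a j = Y q j * v a j + e q j * v a j := by
      intro j; show (Y q j + e q j) * v a j = _; ring
    rw [Finset.sum_congr rfl fun j _ => h1 j, Finset.sum_add_distrib, hev q a, add_zero, hwY]
  have hu : ∀ q : Fin P, (∑ i, Xt q i * e p i) = if q = p then 1 else 0 := by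
    intro q
    have h1 : ∀ i, Xt q i * e p i = Y q i * e p i + e q i * e p i := by
      intro i; show (Y q i + e q i) * e p i = _; ring
    have h2 : ∑ i, Y q i * e p i = 0 := by
      by_cases hq : q ∈ M
      · simp [hY0 q hq]
      · have : ∑ i, Y q i * e p i = z (area q) * ∑ i, e p i * v (area q) i := by
          rw [Finset.mul_sum]
          exact Finset.sum_congr rfl fun i _ => by rw [hY1 q hq i]; ring
        rw [this, hev, mul_zero]
    rw [Finset.sum_congr rfl fun i _ => h1 i, Finset.sum_add_distrib, h2, zero_add]
    by_cases hqp : q = p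
    · rw [hqp, hee, if_pos rfl]
    · rw [he_orth q p hqp, if_neg hqp]
  -- the bilinear pairing with H
  have hbil : ∀ p' q : Fin P, (∑ i, ∑ j, Xt p' i * H i j * Xt q j)
      = (if p' = p then 1 else 0) * (if q ∉ M ∧ area q = m then z m else 0) := by
    intro p' q
    rw [← hu p', ← hw m q, Finset.sum_mul_sum]
    exact Finset.sum_congr rfl fun i _ => Finset.sum_congr rfl fun j _ => by
      simp only [hH]; ring
  have hbilp : ∀ q : Fin P, (∑ i, ∑ j, Xt p i * H i j * Xt q j)
      = if q ∉ M ∧ area q = m then z m else 0 := by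
    intro q; rw [hbil, if_pos rfl, one_mul]
  -- area-attention sums
  have hSA : ∀ a : Fin N, (∑ r, attScore Xt Q p r * (if r ∉ M ∧ area r = a then z a else 0))
      = z a * A a := by
    intro a
    have h1 : ∀ r : Fin P, attScore Xt Q p r * (if r ∉ M ∧ area r = a then z a else 0)
        = if r ∉ M ∧ area r = a then attScore Xt Q p r * z a else 0 := by
      intro r; by_cases h : r ∉ M ∧ area r = a <;> simp [h]
    rw [Finset.sum_congr rfl fun r _ => h1 r, ← Finset.sum_filter, ← Finset.sum_mul]
    exact mul_comm _ _
  -- rewrite the derivative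
  rw [maeLoss_fderiv M X Xt Y Q H]
  rw [Finset.sum_eq_single_of_mem p hp (by
    intro p' _ hne
    simp [hbil, if_neg hne])]
  simp only [hbilp, hSA m]
  -- swap the i and q sums
  have hswap : ∀ (f : Fin d → ℝ) (g : Fin P → ℝ),
      (∑ i, f i * (∑ q, g q * Y q i)) = ∑ q, g q * (∑ i, f i * Y q i) := by
    intro f g
    have h1 : ∀ i, f i * (∑ q, g q * Y q i) = ∑ q, f i * (g q * Y q i) := fun i =>
      Finset.mul_sum _ _ _
    rw [Finset.sum_congr rfl fun i _ => h1 i, Finset.sum_comm]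
    exact Finset.sum_congr rfl fun q _ => by
      rw [Finset.mul_sum]
      exact Finset.sum_congr rfl fun i _ => by ring
  rw [hswap]
  -- evaluate the inner product for unmasked q
  have hinner : ∀ q : Fin P, q ∉ M →
      (∑ i, ((∑ q', attScore Xt Q p q' * Y q' i) - X p i) * Y q i)
      = z (area q) * (z (area q) * A (area q) - if area q = n then z n else 0) := by
    intro q hq
    have h1 : (∑ i, ((∑ q', attScore Xt Q p q' * Y q' i) - X p i) * Y q i)
        = z (area q) * ∑ i, ((∑ q', attScore Xt Q p q' * Y q' i) - X p i) * v (area q) i := by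
      rw [Finset.mul_sum]
      exact Finset.sum_congr rfl fun i _ => by rw [hY1 q hq i]; ring
    rw [h1]
    congr 1
    have h2 : (∑ i, ((∑ q', attScore Xt Q p q' * Y q' i) - X p i) * v (area q) i)
        = (∑ i, (∑ q', attScore Xt Q p q' * Y q' i) * v (area q) i)
          - ∑ i, X p i * v (area q) i := by
      rw [← Finset.sum_sub_distrib]
      exact Finset.sum_congr rfl fun i _ => sub_mul _ _ _
    rw [h2]
    congr 1
    · -- first piece: Σ_i F_i v_a i = z a * A a
      have h3 : (∑ i, (∑ q', attScore Xt Q p q' * Y q' i) * v (area q) i)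
          = ∑ q', attScore Xt Q p q' * ∑ i, Y q' i * v (area q) i := by
        have h4 : ∀ i, (∑ q', attScore Xt Q p q' * Y q' i) * v (area q) i
            = ∑ q', attScore Xt Q p q' * Y q' i * v (area q) i := fun i =>
          Finset.sum_mul _ _ _
        rw [Finset.sum_congr rfl fun i _ => h4 i, Finset.sum_comm]
        exact Finset.sum_congr rfl fun q' _ => by
          rw [Finset.mul_sum]
          exact Finset.sum_congr rfl fun i _ => by ring
      rw [h3, Finset.sum_congr rfl fun q' _ => by rw [hwY (area q) q'], hSA (area q)]
    · -- second piece: Σ_i X_p i v_a i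
      have hXp : ∀ i, X p i = z n * v n i := by
        intro i; show z (area p) * v (area p) i = _; rw [hn]
      have h5 : (∑ i, X p i * v (area q) i) = z n * ∑ i, v n i * v (area q) i := by
        rw [Finset.mul_sum]
        exact Finset.sum_congr rfl fun i _ => by rw [hXp i]; ring
      rw [h5]
      by_cases ha : area q = n
      · rw [ha, hvv n, if_pos rfl, mul_one]
      · rw [hv_orth n (area q) (fun h => ha h.symm), if_neg ha, mul_zero]
  -- fiberwise decomposition over areas
  rw [← Finset.sum_fiberwise (univ : Finset (Fin P)) area]
  have harea : ∀ a : Fin N, (∑ q ∈ filter (fun q => area q = a) univ,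
        attScore Xt Q p q * ((if q ∉ M ∧ area q = m then z m else 0) - z m * A m) *
          (∑ i, ((∑ q', attScore Xt Q p q' * Y q' i) - X p i) * Y q i))
      = A a * (((if a = m then z m else 0) - z m * A m)
          * (z a * (z a * A a - if a = n then z n else 0))) := by
    intro a
    have hzero : ∀ q ∈ filter (fun q => area q = a) univ,
        (attScore Xt Q p q * ((if q ∉ M ∧ area q = m then z m else 0) - z m * A m) *
          (∑ i, ((∑ q', attScore Xt Q p q' * Y q' i) - X p i) * Y q i)) ≠ 0 → q ∉ M := by
      intro q _ hne hqM
      exact hne (by simp [hY0 q hqM])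
    rw [← Finset.sum_filter_of_ne hzero, Finset.filter_filter]
    have hset : filter (fun q => area q = a ∧ q ∉ M) univ
        = filter (fun q => q ∉ M ∧ area q = a) (univ : Finset (Fin P)) := by
      ext q; simp [and_comm]
    rw [hset]
    have hterm : ∀ q ∈ filter (fun q => q ∉ M ∧ area q = a) (univ : Finset (Fin P)),
        attScore Xt Q p q * ((if q ∉ M ∧ area q = m then z m else 0) - z m * A m) *
          (∑ i, ((∑ q', attScore Xt Q p q' * Y q' i) - X p i) * Y q i)
        = attScore Xt Q p q * ((((if a = m then z m else 0) - z m * A m)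
            * (z a * (z a * A a - if a = n then z n else 0)))) := by
      intro q hq
      obtain ⟨h1, h2⟩ := (Finset.mem_filter.mp hq).2
      rw [hinner q h1, h2]
      have h3 : (if q ∉ M ∧ a = m then z m else 0) = if a = m then z m else 0 := by
        simp [h1]
      rw [h3]; ring
    rw [Finset.sum_congr rfl hterm, ← Finset.sum_mul]
    rfl
  rw [Finset.sum_congr rfl fun a _ => harea a]
  -- split off areas m and n
  rw [← Finset.sum_sdiff (Finset.subset_univ ({m, n} : Finset (Fin N))), Finset.sum_pair hm]
  have hnm : ¬(n = m) := fun h => hm h.symm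
  have hdiffsum : ∑ a ∈ univ \ {m, n}, A a * (((if a = m then z m else 0) - z m * A m)
        * (z a * (z a * A a - if a = n then z n else 0)))
      = -(z m * A m) * ∑ a ∈ univ \ {m, n}, z a ^ 2 * A a ^ 2 := by
    rw [Finset.mul_sum]
    refine Finset.sum_congr rfl fun a ha => ?_
    have h1 : a ≠ m ∧ a ≠ n := by
      have := (Finset.mem_sdiff.mp ha).2
      simp only [Finset.mem_insert, Finset.mem_singleton] at this
      exact ⟨fun h => this (Or.inl h), fun h => this (Or.inr h)⟩
    rw [if_neg h1.1, if_neg h1.2]; ring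
  have hrs : ∑ a ∈ univ \ {m, n}, z a ^ 2 * z m * A a ^ 2
      = z m * ∑ a ∈ univ \ {m, n}, z a ^ 2 * A a ^ 2 := by
    rw [Finset.mul_sum]; exact Finset.sum_congr rfl fun a _ => by ring
  rw [hdiffsum, hrs]
  simp only [hm, hnm, eq_self_iff_true, if_true, if_false]
  ring
end
end

section
/- Under the single-cluster pointwise setting, let p ∈ ℳ and q ∈ 𝒫 both lie in the same area 𝒫_n. Then the position–position component of the negative loss gradient satisfies e_pᵀ(−∇_Q ℓ(Q))e_q = s_{p→q}(Q) · ( Σ_{a≠n} z_a² A_a(Q)² + z_n² (1 − A_n(Q)) · ( 1{q ∈ 𝒰} − A_n(Q) ) ), where A_m(Q) = Σ_{r∈𝒰∩𝒫_m} s_{p→r}(Q) and 1{q ∈ 𝒰} is 1 if q is unmasked and 0 otherwise. -/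
/-!
Single-cluster pointwise setting (shared context for Statements 2–6 of the paper):

`𝒫 = Fin P` is partitioned into areas `𝒫_1, …, 𝒫_N` via `area : Fin P → Fin N`
(`𝒫_j = area⁻¹ j`); `v_1, …, v_N ∈ ℝ^d` are pairwise orthogonal unit features;
`z_1, …, z_N ∈ ℝ`; the sample has columns `X_q = z_{area q} v_{area q}`; positional
encodings `e_q` are unit vectors, pairwise orthogonal and orthogonal to every feature;
`ℳ ⊂ 𝒫` is the mask set, `𝒰 = 𝒫 ∖ ℳ`; `Y = mask(X)` zeroes masked columns;
`X̃ = Y + E`; `s_{p→q}(Q)` is the softmax attention on `X̃`;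
`F_p(Q) = Σ_q s_{p→q}(Q) Y_q`; `ℓ(Q) = (1/2) Σ_{p∈ℳ} ‖F_p(Q) − X_p‖²`;
`A_m(Q) = Σ_{q ∈ 𝒰 ∩ 𝒫_m} s_{p→q}(Q)` is the unmasked area attention.

The gradient identities `e_pᵀ(−∇_Q ℓ)v` and `e_pᵀ(−∇_Q ℓ)e_q` are expressed via the
Fréchet derivative of `ℓ` paired against the rank-one directions `e_p vᵀ` resp. `e_p e_qᵀ`
(for a matrix `M` one has `aᵀ M b = ⟨M, a bᵀ⟩_F`).
-/

noncomputable section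

open Finset

variable {d P N : ℕ}

/-! ### Auxiliary lemmas -/

/-- The bilinear form appearing in the attention scores. -/
def bilin (Xt : Fin P → Fin d → ℝ) (Q : Fin d → Fin d → ℝ) (p' r : Fin P) : ℝ :=
  ∑ i, ∑ j, Xt p' i * Q i j * Xt r j

lemma attScore_def (Xt : Fin P → Fin d → ℝ) (Q : Fin d → Fin d → ℝ) (p r : Fin P) :
    attScore Xt Q p r = Real.exp (bilin Xt Q p r) / ∑ u, Real.exp (bilin Xt Q p u) := rfl

/-- The Kronecker-type coefficient of the rank-one perturbation. -/
def cdel (p q p' r : Fin P) : ℝ := (if p' = p then 1 else 0) * (if r = q then 1 else 0)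

/-- Derivative along the line `t ↦ Q + t•H` of one squared-error summand. -/
lemma line_hasDerivAt {P : ℕ} (a c w : Fin P → ℝ) (xv : ℝ) (hP : 0 < P) :
    HasDerivAt (fun t : ℝ =>
        ((∑ r, Real.exp (a r + t * c r) / (∑ u, Real.exp (a u + t * c u)) * w r) - xv) ^ 2)
      (2 * ((∑ r, Real.exp (a r) / (∑ u, Real.exp (a u)) * w r) - xv) *
        (∑ r, (c r * Real.exp (a r) * (∑ u, Real.exp (a u)) -
            Real.exp (a r) * (∑ u, c u * Real.exp (a u))) / (∑ u, Real.exp (a u)) ^ 2 * w r))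
      0 := by
  have hden : (0:ℝ) < ∑ u, Real.exp (a u) :=
    Finset.sum_pos (fun u _ => Real.exp_pos _) ⟨⟨0, hP⟩, mem_univ _⟩
  have hlin : ∀ r, HasDerivAt (fun t : ℝ => a r + t * c r) (c r) 0 := by
    intro r
    simpa using ((hasDerivAt_id (0:ℝ)).mul_const (c r)).const_add (a r)
  have hexp : ∀ r, HasDerivAt (fun t : ℝ => Real.exp (a r + t * c r)) (c r * Real.exp (a r)) 0 := by
    intro r
    simpa [mul_comm] using (hlin r).exp
  have hsum : HasDerivAt (fun t : ℝ => ∑ u, Real.exp (a u + t * c u))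
      (∑ u, c u * Real.exp (a u)) 0 := HasDerivAt.fun_sum (fun u _ => hexp u)
  have hs : ∀ r, HasDerivAt (fun t : ℝ => Real.exp (a r + t * c r) / ∑ u, Real.exp (a u + t * c u))
      ((c r * Real.exp (a r) * (∑ u, Real.exp (a u)) -
        Real.exp (a r) * (∑ u, c u * Real.exp (a u))) / (∑ u, Real.exp (a u)) ^ 2) 0 := by
    intro r
    have := (hexp r).fun_div hsum (by simpa using hden.ne')
    simpa using this
  have hF : HasDerivAt (fun t : ℝ =>
      (∑ r, Real.exp (a r + t * c r) / (∑ u, Real.exp (a u + t * c u)) * w r) - xv)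
      (∑ r, (c r * Real.exp (a r) * (∑ u, Real.exp (a u)) -
        Real.exp (a r) * (∑ u, c u * Real.exp (a u))) / (∑ u, Real.exp (a u)) ^ 2 * w r) 0 :=
    (HasDerivAt.fun_sum (fun r _ => (hs r).mul_const (w r))).sub_const xv
  have := hF.fun_pow 2
  simpa [mul_comm, mul_assoc, mul_left_comm] using this

/-- Scalar identity for the softmax quotient derivative. -/
lemma ratio_helper (delta Er Eq D y : ℝ) (hD : D ≠ 0) :
    (delta * Er * D - Er * Eq) / D ^ 2 * y
      = delta * (Er / D * y) - Eq / D * (Er / D * y) := by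
  field_simp

/-- The Frechet derivative of the loss paired against a rank-one direction `ep ⊗ eq'`
that is dual to the positions `p` and `q`. -/
lemma fderiv_maeLoss_rankone (X Xt Y : Fin P → Fin d → ℝ) (M : Finset (Fin P))
    (Q : Fin d → Fin d → ℝ) (p q : Fin P) (hp : p ∈ M) (ep eq' : Fin d → ℝ)
    (hc1 : ∀ p', (∑ i, Xt p' i * ep i) = if p' = p then 1 else 0)
    (hc2 : ∀ r, (∑ j, Xt r j * eq' j) = if r = q then 1 else 0) :
    fderiv ℝ (maeLoss M X Xt Y) Q (fun i j => ep i * eq' j)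
      = ∑ i, (Fout Xt Y Q p i - X p i) *
          (attScore Xt Q p q * (Y q i - Fout Xt Y Q p i)) := by
  have hP : 0 < P := p.pos
  set H : Fin d → Fin d → ℝ := fun i j => ep i * eq' j with hH
  have hden : ∀ p', (0:ℝ) < ∑ u, Real.exp (bilin Xt Q p' u) :=
    fun p' => Finset.sum_pos (fun u _ => Real.exp_pos _) ⟨p, mem_univ _⟩
  -- differentiability of the loss
  have hdiffs : ∀ p' r, DifferentiableAt ℝ (fun Q' => attScore Xt Q' p' r) Q := by
    intro p' r
    unfold attScore
    simp only [div_eq_mul_inv]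
    apply DifferentiableAt.mul
    · fun_prop
    · apply DifferentiableAt.inv
      · fun_prop
      · exact (Finset.sum_pos (fun u _ => Real.exp_pos _)
          (⟨p, mem_univ _⟩ : (univ : Finset (Fin P)).Nonempty)).ne'
  have hdiff : DifferentiableAt ℝ (maeLoss M X Xt Y) Q := by
    unfold maeLoss Fout
    apply DifferentiableAt.const_mul
    apply DifferentiableAt.fun_sum; intro p' _
    apply DifferentiableAt.fun_sum; intro i _
    exact ((DifferentiableAt.fun_sum fun r _ => (hdiffs p' r).mul_const _).sub_const _).pow 2
  -- the line through Q in direction H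
  have hmap : HasDerivAt (fun t : ℝ => Q + t • H) H 0 := by
    simpa using ((hasDerivAt_id (0:ℝ)).smul_const H).const_add Q
  have h0 : HasFDerivAt (maeLoss M X Xt Y) (fderiv ℝ (maeLoss M X Xt Y) Q) (Q + (0:ℝ) • H) := by
    rw [show Q + (0:ℝ) • H = Q by simp]
    exact hdiff.hasFDerivAt
  have hline : HasDerivAt (fun t : ℝ => maeLoss M X Xt Y (Q + t • H))
      (fderiv ℝ (maeLoss M X Xt Y) Q H) 0 := by
    have := h0.comp_hasDerivAt 0 hmap
    exact this
  -- rewrite the line function explicitly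
  have hexpand : ∀ (t : ℝ) (p' r : Fin P),
      (∑ i, ∑ j, Xt p' i * (Q + t • H) i j * Xt r j)
        = bilin Xt Q p' r + t * cdel p q p' r := by
    intro t p' r
    have hQt : ∀ i j, (Q + t • H) i j = Q i j + t * (ep i * eq' j) := by
      intro i j; simp [hH]
    have h : ∀ i j, Xt p' i * (Q i j + t * (ep i * eq' j)) * Xt r j
        = Xt p' i * Q i j * Xt r j + t * ((Xt p' i * ep i) * (Xt r j * eq' j)) := by
      intros; ring
    simp only [hQt, h, Finset.sum_add_distrib, ← Finset.mul_sum, ← Finset.sum_mul_sum,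
      ← Finset.sum_mul, hc1, hc2]
    rfl
  have hfun : (fun t : ℝ => maeLoss M X Xt Y (Q + t • H))
      = fun t : ℝ => (1/2 : ℝ) * ∑ p' ∈ M, ∑ i,
          ((∑ r, Real.exp (bilin Xt Q p' r + t * cdel p q p' r) /
            (∑ u, Real.exp (bilin Xt Q p' u + t * cdel p q p' u)) * Y r i) - X p' i) ^ 2 := by
    funext t
    unfold maeLoss Fout attScore
    simp only [hexpand]
  have hline2 : HasDerivAt (fun t : ℝ => maeLoss M X Xt Y (Q + t • H))
      ((1/2 : ℝ) * ∑ p' ∈ M, ∑ i,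
        2 * ((∑ r, Real.exp (bilin Xt Q p' r) / (∑ u, Real.exp (bilin Xt Q p' u)) * Y r i)
            - X p' i) *
          (∑ r, (cdel p q p' r * Real.exp (bilin Xt Q p' r) * (∑ u, Real.exp (bilin Xt Q p' u)) -
              Real.exp (bilin Xt Q p' r) * (∑ u, cdel p q p' u * Real.exp (bilin Xt Q p' u))) /
              (∑ u, Real.exp (bilin Xt Q p' u)) ^ 2 * Y r i)) 0 := by
    rw [hfun]
    exact HasDerivAt.const_mul _ (HasDerivAt.fun_sum fun p' _ => HasDerivAt.fun_sum fun i _ =>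
      line_hasDerivAt (fun r => bilin Xt Q p' r) (fun r => cdel p q p' r) (fun r => Y r i)
        (X p' i) hP)
  have huniq := hline.unique hline2
  rw [huniq]
  -- now simplify the explicit derivative
  rw [Finset.sum_eq_single_of_mem p hp]
  · -- the `p` term
    rw [Finset.mul_sum]
    apply Finset.sum_congr rfl
    intro i _
    have hsum_q : (∑ u, cdel p q p u * Real.exp (bilin Xt Q p u))
        = Real.exp (bilin Xt Q p q) := by
      simp [cdel]
    have hterm : ∀ r, (cdel p q p r * Real.exp (bilin Xt Q p r) *
            (∑ u, Real.exp (bilin Xt Q p u)) -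
          Real.exp (bilin Xt Q p r) * (∑ u, cdel p q p u * Real.exp (bilin Xt Q p u))) /
          (∑ u, Real.exp (bilin Xt Q p u)) ^ 2 * Y r i
        = (if r = q then (1:ℝ) else 0) *
              (Real.exp (bilin Xt Q p r) / (∑ u, Real.exp (bilin Xt Q p u)) * Y r i)
            - Real.exp (bilin Xt Q p q) / (∑ u, Real.exp (bilin Xt Q p u)) *
              (Real.exp (bilin Xt Q p r) / (∑ u, Real.exp (bilin Xt Q p u)) * Y r i) := by
      intro r
      rw [hsum_q]
      have hc : cdel p q p r = if r = q then (1:ℝ) else 0 := by simp [cdel]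
      rw [hc]
      exact ratio_helper _ _ _ _ _ (hden p).ne'
    rw [Finset.sum_congr rfl fun r _ => hterm r, Finset.sum_sub_distrib]
    have h1 : (∑ r, (if r = q then (1:ℝ) else 0) *
          (Real.exp (bilin Xt Q p r) / (∑ u, Real.exp (bilin Xt Q p u)) * Y r i))
        = Real.exp (bilin Xt Q p q) / (∑ u, Real.exp (bilin Xt Q p u)) * Y q i := by
      simp
    have h2 : (∑ r, Real.exp (bilin Xt Q p q) / (∑ u, Real.exp (bilin Xt Q p u)) *
          (Real.exp (bilin Xt Q p r) / (∑ u, Real.exp (bilin Xt Q p u)) * Y r i))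
        = Real.exp (bilin Xt Q p q) / (∑ u, Real.exp (bilin Xt Q p u)) *
          (∑ r, Real.exp (bilin Xt Q p r) / (∑ u, Real.exp (bilin Xt Q p u)) * Y r i) := by
      rw [← Finset.mul_sum]
    rw [h1, h2]
    simp only [Fout, attScore_def]
    ring
  · -- other terms vanish
    intro p' _ hne
    have hz : ∀ r, cdel p q p' r = 0 := by intro r; simp [cdel, hne]
    simp [hz]

/-- for a masked patch `p` and a patch `q` in the same area `𝒫_n`,
`e_pᵀ(−∇_Q ℓ(Q))e_q = s_{p→q}(Q)·(Σ_{a≠n} z_a² A_a(Q)²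
  + z_n²(1−A_n(Q))·(1{q∈𝒰} − A_n(Q)))`. -/
theorem pp_gradient_same_area (area : Fin P → Fin N) (v : Fin N → Fin d → ℝ)
    (z : Fin N → ℝ) (e : Fin P → Fin d → ℝ)
    (hv_unit : ∀ n, ∑ i, v n i ^ 2 = 1)
    (hv_orth : ∀ n n', n ≠ n' → ∑ i, v n i * v n' i = 0)
    (he_unit : ∀ p, ∑ i, e p i ^ 2 = 1)
    (he_orth : ∀ p q, p ≠ q → ∑ i, e p i * e q i = 0)
    (hev : ∀ p n, ∑ i, e p i * v n i = 0)
    (M : Finset (Fin P)) (Q : Fin d → Fin d → ℝ)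
    (p : Fin P) (hp : p ∈ M) (n : Fin N) (hn : area p = n)
    (q : Fin P) (hq : area q = n) :
    (let X := Xcol area v z;
     let Y := Ycol M X;
     let Xt := XtCol e Y;
     let A := areaAttn area M Xt Q p;
     -(fderiv ℝ (maeLoss M X Xt Y) Q (fun i j => e p i * e q j)) =
       attScore Xt Q p q * ((∑ a ∈ Finset.univ \ {n}, z a ^ 2 * A a ^ 2) +
         z n ^ 2 * (1 - A n) * ((if q ∉ M then (1 : ℝ) else 0) - A n))) := by
  simp only []
  set X := Xcol area v z with hXdef
  set Y := Ycol M X with hYdef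
  set Xt := XtCol e Y with hXtdef
  set A := areaAttn area M Xt Q p with hAdef
  -- duality of positional encodings against the augmented inputs
  have hdual : ∀ (w : Fin P) (r : Fin P), (∑ j, Xt r j * e w j) = if r = w then 1 else 0 := by
    intro w r
    have hsplit : ∀ j, Xt r j * e w j = Y r j * e w j + e r j * e w j := by
      intro j; rw [hXtdef]; unfold XtCol; ring
    rw [Finset.sum_congr rfl fun j _ => hsplit j, Finset.sum_add_distrib]
    have h1 : (∑ j, Y r j * e w j) = 0 := by
      rw [hYdef]; unfold Ycol
      by_cases h : r ∈ M
      · simp [h]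
      · simp only [h, if_false]
        rw [hXdef]; unfold Xcol
        have hcomm : ∀ j, z (area r) * v (area r) j * e w j
            = z (area r) * (e w j * v (area r) j) := by intro j; ring
        simp only [hcomm, ← Finset.mul_sum, hev w (area r), mul_zero]
    have h2 : (∑ j, e r j * e w j) = if r = w then 1 else 0 := by
      rcases eq_or_ne r w with h | h
      · subst h
        simp [show ∀ j, e r j * e r j = e r j ^ 2 from fun j => (sq _).symm, he_unit r]
      · simp [h, he_orth r w h]
    rw [h1, h2, zero_add]
  rw [fderiv_maeLoss_rankone X Xt Y M Q p q hp (e p) (e q)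
    (fun p' => hdual p p') (fun r => hdual q r)]
  -- coefficient expansion of the output
  have hFo : ∀ i, Fout Xt Y Q p i = ∑ m, (A m * z m) * v m i := by
    intro i
    unfold Fout
    have h1 : ∀ r : Fin P, attScore Xt Q p r * Y r i
        = if r ∉ M then attScore Xt Q p r * (z (area r) * v (area r) i) else 0 := by
      intro r
      by_cases h : r ∈ M
      · simp [hYdef, Ycol, h]
      · simp [hYdef, Ycol, hXdef, Xcol, h]
    rw [Finset.sum_congr rfl fun r _ => h1 r, ← Finset.sum_filter,
      ← Finset.sum_fiberwise_of_maps_to (g := area) (t := univ) (fun x _ => mem_univ (area x))]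
    apply Finset.sum_congr rfl
    intro m _
    rw [Finset.filter_filter]
    have h2 : ∀ r ∈ univ.filter (fun r => r ∉ M ∧ area r = m),
        attScore Xt Q p r * (z (area r) * v (area r) i)
          = attScore Xt Q p r * (z m * v m i) := by
      intro r hr
      rcases Finset.mem_filter.mp hr with ⟨-, -, h⟩
      rw [h]
    rw [Finset.sum_congr rfl h2, ← Finset.sum_mul, hAdef]
    unfold areaAttn
    ring
  -- orthonormal expansion of inner products
  have hip : ∀ ca cb : Fin N → ℝ,
      (∑ i, (∑ m, ca m * v m i) * (∑ m, cb m * v m i)) = ∑ m, ca m * cb m := by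
    intro ca cb
    have h : ∀ i, (∑ m, ca m * v m i) * (∑ m, cb m * v m i)
        = ∑ m, ∑ m', ca m * cb m' * (v m i * v m' i) := by
      intro i
      rw [Finset.sum_mul_sum]
      exact Finset.sum_congr rfl fun m _ => Finset.sum_congr rfl fun m' _ => by ring
    rw [Finset.sum_congr rfl fun i _ => h i, Finset.sum_comm]
    apply Finset.sum_congr rfl
    intro m _
    rw [Finset.sum_comm]
    have h3 : ∀ m', (∑ i, ca m * cb m' * (v m i * v m' i))
        = ca m * cb m' * ∑ i, v m i * v m' i := by
      intro m'; rw [Finset.mul_sum]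
    rw [Finset.sum_congr rfl fun m' _ => h3 m', Finset.sum_eq_single m]
    · rw [show (∑ i, v m i * v m i) = 1 from by
        simpa [show ∀ i, v m i * v m i = v m i ^ 2 from fun i => (sq _).symm] using hv_unit m]
      ring
    · intro m' _ hne
      rw [hv_orth m m' (Ne.symm hne), mul_zero]
    · intro h; exact absurd (mem_univ m) h
  -- coefficient forms of the two difference vectors
  have hXp : ∀ i, X p i = ∑ m, (if m = n then z n else 0) * v m i := by
    intro i
    rw [hXdef]; unfold Xcol
    rw [hn]
    simp [ite_mul]
  have hYq : ∀ i, Y q i = ∑ m, (if m = n then (if q ∈ M then 0 else z n) else 0) * v m i := by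
    intro i
    rw [hYdef]; unfold Ycol
    rw [hXdef]; unfold Xcol
    rw [hq]
    by_cases h : q ∈ M <;> simp [h, ite_mul]
  have hkey : (∑ i, (Fout Xt Y Q p i - X p i) *
        (attScore Xt Q p q * (Y q i - Fout Xt Y Q p i)))
      = -(attScore Xt Q p q *
          ∑ m, ((A m * z m - if m = n then z n else 0) *
            (A m * z m - if m = n then (if q ∈ M then 0 else z n) else 0))) := by
    have hterm : ∀ i, (Fout Xt Y Q p i - X p i) *
          (attScore Xt Q p q * (Y q i - Fout Xt Y Q p i))
        = -(attScore Xt Q p q *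
            ((∑ m, (A m * z m - if m = n then z n else 0) * v m i) *
             (∑ m, (A m * z m - if m = n then (if q ∈ M then 0 else z n) else 0) * v m i))) := by
      intro i
      have e1 : Fout Xt Y Q p i - X p i
          = ∑ m, (A m * z m - if m = n then z n else 0) * v m i := by
        rw [hFo i, hXp i, ← Finset.sum_sub_distrib]
        exact Finset.sum_congr rfl fun m _ => by ring
      have e2 : Fout Xt Y Q p i - Y q i
          = ∑ m, (A m * z m - if m = n then (if q ∈ M then 0 else z n) else 0) * v m i := by
        rw [hFo i, hYq i, ← Finset.sum_sub_distrib]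
        exact Finset.sum_congr rfl fun m _ => by ring
      have : Y q i - Fout Xt Y Q p i = -(Fout Xt Y Q p i - Y q i) := by ring
      rw [this, e2, e1]
      ring
    rw [Finset.sum_congr rfl fun i _ => hterm i, Finset.sum_neg_distrib, ← Finset.mul_sum,
      hip]
  rw [hkey, neg_neg]
  congr 1
  -- split the sum at `n`
  rw [← Finset.sum_erase_add _ _ (mem_univ n), Finset.sdiff_singleton_eq_erase]
  congr 1
  · apply Finset.sum_congr rfl
    intro m hm
    have hne : m ≠ n := (Finset.mem_erase.mp hm).1
    simp only [if_neg hne, sub_zero]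
    ring
  · simp only [if_pos rfl]
    by_cases h : q ∈ M <;> simp [h] <;> ring
end
end

section
/- Under the single-cluster pointwise setting, let p ∈ ℳ lie in area 𝒫_n and q ∈ 𝒫 lie in a different area 𝒫_m with m ≠ n. Then e_pᵀ(−∇_Q ℓ(Q))e_q = s_{p→q}(Q) · ( Σ_{a≠n} z_a² A_a(Q)² − ( z_n² (1 − A_n(Q)) A_n(Q) + 1{q ∈ 𝒰} · z_m² A_m(Q) ) ), where A_j(Q) = Σ_{r∈𝒰∩𝒫_j} s_{p→r}(Q) and 1{q ∈ 𝒰} is 1 if q is unmasked and 0 otherwise. -/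
/-!
Single-cluster pointwise setting (shared context for Statements 2–6 of the paper):

`𝒫 = Fin P` is partitioned into areas `𝒫_1, …, 𝒫_N` via `area : Fin P → Fin N`
(`𝒫_j = area⁻¹ j`); `v_1, …, v_N ∈ ℝ^d` are pairwise orthogonal unit features;
`z_1, …, z_N ∈ ℝ`; the sample has columns `X_q = z_{area q} v_{area q}`; positional
encodings `e_q` are unit vectors, pairwise orthogonal and orthogonal to every feature;
`ℳ ⊂ 𝒫` is the mask set, `𝒰 = 𝒫 ∖ ℳ`; `Y = mask(X)` zeroes masked columns;
`X̃ = Y + E`; `s_{p→q}(Q)` is the softmax attention on `X̃`;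
`F_p(Q) = Σ_q s_{p→q}(Q) Y_q`; `ℓ(Q) = (1/2) Σ_{p∈ℳ} ‖F_p(Q) − X_p‖²`;
`A_m(Q) = Σ_{q ∈ 𝒰 ∩ 𝒫_m} s_{p→q}(Q)` is the unmasked area attention.

The gradient identities `e_pᵀ(−∇_Q ℓ)v` and `e_pᵀ(−∇_Q ℓ)e_q` are expressed via the
Fréchet derivative of `ℓ` paired against the rank-one directions `e_p vᵀ` resp. `e_p e_qᵀ`
(for a matrix `M` one has `aᵀ M b = ⟨M, a bᵀ⟩_F`).
-/

noncomputable section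

open Finset

variable {d P N : ℕ}

def bilCLM (u w : Fin d → ℝ) : (Fin d → Fin d → ℝ) →L[ℝ] ℝ :=
  LinearMap.toContinuousLinearMap
  { toFun := fun Q => ∑ i, ∑ j, u i * Q i j * w j
    map_add' := fun Q R => by
      rw [← Finset.sum_add_distrib]
      refine Finset.sum_congr rfl fun i _ => ?_
      rw [← Finset.sum_add_distrib]
      refine Finset.sum_congr rfl fun j _ => ?_
      simp only [Pi.add_apply]; ring
    map_smul' := fun c Q => by
      simp only [RingHom.id_apply, smul_eq_mul, Finset.mul_sum]
      refine Finset.sum_congr rfl fun i _ => ?_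
      refine Finset.sum_congr rfl fun j _ => ?_
      simp only [Pi.smul_apply, smul_eq_mul]; ring }

lemma bilCLM_apply (u w : Fin d → ℝ) (Q : Fin d → Fin d → ℝ) :
    bilCLM u w Q = ∑ i, ∑ j, u i * Q i j * w j := rfl

lemma scalar_aux {A : Type*} (s : Finset A) (den : ℝ) (h0 : den ≠ 0) (E bh : A → ℝ) (Er bhr : ℝ) :
    Er * (-(den ^ 2)⁻¹ * ∑ x ∈ s, E x * bh x) + den⁻¹ * (Er * bhr) =
      Er / den * (bhr - ∑ x ∈ s, E x / den * bh x) := by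
  have h : ∑ x ∈ s, E x / den * bh x = (∑ x ∈ s, E x * bh x) / den := by
    rw [Finset.sum_div]; exact Finset.sum_congr rfl fun x _ => by ring
  rw [h]
  field_simp
  ring

set_option maxHeartbeats 1000000 in
lemma bilCLM_rankone (u w a b : Fin d → ℝ) :
    bilCLM u w (fun i j => a i * b j) = (∑ i, u i * a i) * (∑ j, b j * w j) := by
  rw [bilCLM_apply, Finset.sum_mul_sum]
  refine Finset.sum_congr rfl fun i _ => Finset.sum_congr rfl fun j _ => by ring

lemma maeLoss_fderiv_apply (hP : 0 < P) (M : Finset (Fin P)) (X Xt Y : Fin P → Fin d → ℝ)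
    (Q H : Fin d → Fin d → ℝ) :
    fderiv ℝ (maeLoss M X Xt Y) Q H =
      (1/2) * ∑ a ∈ M, ∑ i, (2 * (Fout Xt Y Q a i - X a i)) *
        (∑ r, Y r i * (attScore Xt Q a r *
          (bilCLM (Xt a) (Xt r) H - ∑ r', attScore Xt Q a r' * bilCLM (Xt a) (Xt r') H))) := by
  have : Nonempty (Fin P) := ⟨⟨0, hP⟩⟩
  set B : Fin P → Fin P → ((Fin d → Fin d → ℝ) →L[ℝ] ℝ) := fun a b => bilCLM (Xt a) (Xt b)
    with hB
  have hBfun : ∀ a r : Fin P,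
      HasFDerivAt (fun Q' : Fin d → Fin d → ℝ => ∑ i, ∑ j, Xt a i * Q' i j * Xt r j)
        (B a r) Q := fun a r => (B a r).hasFDerivAt
  set den : Fin P → ℝ := fun a => ∑ r, Real.exp (B a r Q) with hden_def
  have hdenpos : ∀ a, 0 < den a := fun a =>
    Finset.sum_pos (fun r _ => Real.exp_pos _) Finset.univ_nonempty
  set denD : Fin P → ((Fin d → Fin d → ℝ) →L[ℝ] ℝ) :=
    fun a => ∑ r, Real.exp (B a r Q) • B a r with hdenD
  have hden : ∀ a, HasFDerivAt
      (fun Q' => ∑ r, Real.exp (∑ i, ∑ j, Xt a i * Q' i j * Xt r j)) (denD a) Q :=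
    fun a => HasFDerivAt.fun_sum (fun r _ => (hBfun a r).exp)
  have hinv : ∀ a, HasFDerivAt
      (fun Q' => (∑ r, Real.exp (∑ i, ∑ j, Xt a i * Q' i j * Xt r j))⁻¹)
      ((-(den a ^ 2)⁻¹) • denD a) Q := fun a =>
    (hasDerivAt_inv (ne_of_gt (hdenpos a))).comp_hasFDerivAt Q (hden a)
  set Ds : Fin P → Fin P → ((Fin d → Fin d → ℝ) →L[ℝ] ℝ) := fun a r =>
    Real.exp (B a r Q) • ((-(den a ^ 2)⁻¹) • denD a) +
      (den a)⁻¹ • (Real.exp (B a r Q) • B a r) with hDs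
  have hs : ∀ a r, HasFDerivAt (fun Q' => attScore Xt Q' a r) (Ds a r) Q := by
    intro a r
    have heq : (fun Q' => attScore Xt Q' a r) = fun Q' =>
        Real.exp (∑ i, ∑ j, Xt a i * Q' i j * Xt r j) *
          (∑ r', Real.exp (∑ i, ∑ j, Xt a i * Q' i j * Xt r' j))⁻¹ := by
      funext Q'; rw [attScore, div_eq_mul_inv]
    rw [heq]
    exact ((hBfun a r).exp).mul (hinv a)
  have hF : ∀ a i, HasFDerivAt (fun Q' => Fout Xt Y Q' a i) (∑ r, Y r i • Ds a r) Q := by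
    intro a i
    have : HasFDerivAt (fun Q' => ∑ r, attScore Xt Q' a r * Y r i)
        (∑ r, Y r i • Ds a r) Q :=
      HasFDerivAt.fun_sum (fun r _ => (hs a r).mul_const (Y r i))
    exact this
  have hL : HasFDerivAt (maeLoss M X Xt Y)
      ((1/2 : ℝ) • ∑ a ∈ M, ∑ i, ((2:ℕ) * (Fout Xt Y Q a i - X a i) ^ 1) •
        (∑ r, Y r i • Ds a r)) Q := by
    have : HasFDerivAt (fun Q' => ∑ a ∈ M, ∑ i, (Fout Xt Y Q' a i - X a i) ^ 2)
        (∑ a ∈ M, ∑ i, ((2:ℕ) * (Fout Xt Y Q a i - X a i) ^ 1) • (∑ r, Y r i • Ds a r)) Q :=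
      HasFDerivAt.fun_sum fun a _ => HasFDerivAt.fun_sum fun i _ =>
        by have h := (hasDerivAt_pow 2 (Fout Xt Y Q a i - X a i)).comp_hasFDerivAt Q
             ((hF a i).sub_const (X a i))
           exact h
    exact this.const_mul (1/2 : ℝ)
  rw [hL.fderiv]
  simp only [ContinuousLinearMap.smul_apply, ContinuousLinearMap.coe_sum',
    Finset.sum_apply, ContinuousLinearMap.add_apply, smul_eq_mul, hDs, hdenD]
  congr 1
  refine Finset.sum_congr rfl fun a _ => Finset.sum_congr rfl fun i _ => ?_
  have h0 : den a ≠ 0 := ne_of_gt (hdenpos a)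
  have hscore : ∀ r', attScore Xt Q a r' = Real.exp (B a r' Q) / den a := fun r' => rfl
  simp only [hscore, pow_one, Nat.cast_ofNat]
  congr 1
  refine Finset.sum_congr rfl fun r _ => ?_
  congr 1
  exact scalar_aux Finset.univ (den a) h0 (fun x => Real.exp (B a x Q))
    (fun x => B a x H) (Real.exp (B a r Q)) (B a r H)

/-- for a masked patch `p` in area `𝒫_n` and a patch `q` in a different
area `𝒫_m` (`m ≠ n`),
`e_pᵀ(−∇_Q ℓ(Q))e_q = s_{p→q}(Q)·(Σ_{a≠n} z_a² A_a(Q)²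
  − (z_n²(1−A_n(Q))A_n(Q) + 1{q∈𝒰}·z_m² A_m(Q)))`. -/
theorem pp_gradient_other_area (area : Fin P → Fin N) (v : Fin N → Fin d → ℝ)
    (z : Fin N → ℝ) (e : Fin P → Fin d → ℝ)
    (hv_unit : ∀ n, ∑ i, v n i ^ 2 = 1)
    (hv_orth : ∀ n n', n ≠ n' → ∑ i, v n i * v n' i = 0)
    (he_unit : ∀ p, ∑ i, e p i ^ 2 = 1)
    (he_orth : ∀ p q, p ≠ q → ∑ i, e p i * e q i = 0)
    (hev : ∀ p n, ∑ i, e p i * v n i = 0)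
    (M : Finset (Fin P)) (Q : Fin d → Fin d → ℝ)
    (p : Fin P) (hp : p ∈ M) (n : Fin N) (hn : area p = n)
    (q : Fin P) (m : Fin N) (hq : area q = m) (hm : m ≠ n) :
    (let X := Xcol area v z;
     let Y := Ycol M X;
     let Xt := XtCol e Y;
     let A := areaAttn area M Xt Q p;
     -(fderiv ℝ (maeLoss M X Xt Y) Q (fun i j => e p i * e q j)) =
       attScore Xt Q p q * ((∑ a ∈ Finset.univ \ {n}, z a ^ 2 * A a ^ 2) -
         (z n ^ 2 * (1 - A n) * A n +
           (if q ∉ M then (1 : ℝ) else 0) * z m ^ 2 * A m))) := by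
  intro X Y Xt A
  have hXdef : X = Xcol area v z := rfl
  have hYdef : Y = Ycol M X := rfl
  have hXtdef : Xt = XtCol e Y := rfl
  have hAdef : A = areaAttn area M Xt Q p := rfl
  have hP : 0 < P := p.pos
  set H : Fin d → Fin d → ℝ := fun i j => e p i * e q j with hH
  -- orthonormality of the features
  have hvv : ∀ a b, (∑ i, v a i * v b i) = if a = b then 1 else 0 := by
    intro a b
    by_cases h : a = b
    · subst h; rw [if_pos rfl, ← hv_unit a]
      exact Finset.sum_congr rfl fun i _ => (pow_two (v a i)).symm
    · rw [if_neg h]; exact hv_orth a b h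
  have hee : ∀ a b : Fin P, (∑ i, e a i * e b i) = if a = b then 1 else 0 := by
    intro a b
    by_cases h : a = b
    · subst h; rw [if_pos rfl, ← he_unit a]
      exact Finset.sum_congr rfl fun i _ => (pow_two (e a i)).symm
    · rw [if_neg h]; exact he_orth a b h
  -- Xt dotted with positional encodings
  have hXtE : ∀ a r : Fin P, (∑ i, Xt a i * e r i) = if a = r then 1 else 0 := by
    intro a r
    have : ∀ i, Xt a i * e r i = Y a i * e r i + e a i * e r i := by
      intro i; rw [hXtdef]; show (Y a i + e a i) * e r i = _; ring
    rw [Finset.sum_congr rfl fun i _ => this i, Finset.sum_add_distrib]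
    have hY0 : (∑ i, Y a i * e r i) = 0 := by
      by_cases h : a ∈ M
      · have : ∀ i, Y a i * e r i = 0 := by
          intro i; rw [hYdef]; show (if a ∈ M then 0 else X a i) * e r i = 0
          rw [if_pos h, zero_mul]
        simp [this]
      · have : ∀ i, Y a i * e r i = z (area a) * (e r i * v (area a) i) := by
          intro i; rw [hYdef]; show (if a ∈ M then 0 else X a i) * e r i = _
          rw [if_neg h, hXdef]; show z (area a) * v (area a) i * e r i = _; ring
        rw [Finset.sum_congr rfl fun i _ => this i, ← Finset.mul_sum, hev, mul_zero]
    rw [hY0, zero_add, hee]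
  -- the rank-one direction pairs to a product of indicators
  have hBH : ∀ a r : Fin P, bilCLM (Xt a) (Xt r) H =
      (if a = p then 1 else 0) * (if r = q then 1 else 0) := by
    intro a r
    rw [hH, bilCLM_rankone, hXtE]
    congr 1
    rw [show (∑ j, e q j * Xt r j) = ∑ j, Xt r j * e q j from
      Finset.sum_congr rfl fun j _ => mul_comm _ _, hXtE]
  -- collapse the derivative sum to the single masked patch p
  rw [maeLoss_fderiv_apply hP M X Xt Y Q H]
  have hcollapse : ∑ a ∈ M, ∑ i, (2 * (Fout Xt Y Q a i - X a i)) *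
      (∑ r, Y r i * (attScore Xt Q a r *
        (bilCLM (Xt a) (Xt r) H - ∑ r', attScore Xt Q a r' * bilCLM (Xt a) (Xt r') H))) =
      ∑ i, (2 * (Fout Xt Y Q p i - X p i)) *
        (attScore Xt Q p q * (Y q i - Fout Xt Y Q p i)) := by
    rw [Finset.sum_eq_single_of_mem p hp]
    · refine Finset.sum_congr rfl fun i _ => ?_
      congr 1
      have h1 : ∀ r : Fin P, bilCLM (Xt p) (Xt r) H = (if r = q then 1 else 0) := by
        intro r; rw [hBH, if_pos rfl, one_mul]
      have h2 : (∑ r', attScore Xt Q p r' * bilCLM (Xt p) (Xt r') H) = attScore Xt Q p q := by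
        rw [Finset.sum_congr rfl fun r' _ => by rw [h1 r']]
        simp [mul_ite, mul_one, mul_zero]
      calc ∑ r, Y r i * (attScore Xt Q p r *
            (bilCLM (Xt p) (Xt r) H - ∑ r', attScore Xt Q p r' * bilCLM (Xt p) (Xt r') H))
          = ∑ r, ((if r = q then Y r i * attScore Xt Q p r else 0)
              - attScore Xt Q p q * (attScore Xt Q p r * Y r i)) := by
            refine Finset.sum_congr rfl fun r _ => ?_
            rw [h1, h2]
            by_cases h : r = q
            · simp only [if_pos h]; ring
            · simp only [if_neg h]; ring
        _ = attScore Xt Q p q * (Y q i - Fout Xt Y Q p i) := by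
            rw [Finset.sum_sub_distrib, Finset.sum_ite_eq' Finset.univ q,
              if_pos (Finset.mem_univ q), ← Finset.mul_sum]
            show Y q i * attScore Xt Q p q
              - attScore Xt Q p q * Fout Xt Y Q p i = _
            ring
    · intro a ha hne
      have h0 : ∀ r : Fin P, bilCLM (Xt a) (Xt r) H = 0 := by
        intro r; rw [hBH, if_neg hne, zero_mul]
      simp [h0]
  rw [hcollapse]
  -- representation of Fout p in the feature basis
  have hFrep : ∀ i, Fout Xt Y Q p i = ∑ a, (z a * A a) * v a i := by
    intro i
    have h1 : Fout Xt Y Q p i = ∑ r ∈ Finset.univ.filter (fun r : Fin P => r ∉ M),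
        attScore Xt Q p r * (z (area r) * v (area r) i) := by
      rw [Finset.sum_filter]
      show ∑ r, attScore Xt Q p r * Y r i = _
      refine Finset.sum_congr rfl fun r _ => ?_
      by_cases h : r ∈ M
      · rw [if_neg (not_not_intro h), hYdef]
        show attScore Xt Q p r * (if r ∈ M then 0 else X r i) = 0
        rw [if_pos h, mul_zero]
      · rw [if_pos h, hYdef]
        show attScore Xt Q p r * (if r ∈ M then 0 else X r i) = _
        rw [if_neg h, hXdef]; rfl
    rw [h1, ← Finset.sum_fiberwise (Finset.univ.filter (fun r : Fin P => r ∉ M)) area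
      (fun r => attScore Xt Q p r * (z (area r) * v (area r) i))]
    refine Finset.sum_congr rfl fun a _ => ?_
    rw [Finset.filter_filter]
    calc ∑ r ∈ Finset.univ.filter (fun r => r ∉ M ∧ area r = a),
          attScore Xt Q p r * (z (area r) * v (area r) i)
        = ∑ r ∈ Finset.univ.filter (fun r => r ∉ M ∧ area r = a),
          attScore Xt Q p r * (z a * v a i) := by
          refine Finset.sum_congr rfl fun r hr => ?_
          rw [(Finset.mem_filter.mp hr).2.2]
      _ = (z a * A a) * v a i := by
          rw [← Finset.sum_mul, hAdef]
          show (∑ r ∈ Finset.univ.filter (fun r => r ∉ M ∧ area r = a),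
            attScore Xt Q p r) * (z a * v a i)
            = z a * (∑ r ∈ Finset.univ.filter (fun r => r ∉ M ∧ area r = a),
              attScore Xt Q p r) * v a i
          ring
  -- dot-product lemmas
  have hdotc : ∀ (c : Fin N → ℝ) (b : Fin N),
      (∑ i, (∑ a, c a * v a i) * v b i) = c b := by
    intro c b
    have h1 : ∀ i, (∑ a, c a * v a i) * v b i = ∑ a, c a * (v a i * v b i) := by
      intro i; rw [Finset.sum_mul]
      exact Finset.sum_congr rfl fun a _ => by ring
    rw [Finset.sum_congr rfl fun i _ => h1 i, Finset.sum_comm]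
    have h2 : ∀ a, (∑ i, c a * (v a i * v b i)) = c a * (if a = b then 1 else 0) := by
      intro a; rw [← Finset.mul_sum, hvv]
    rw [Finset.sum_congr rfl fun a _ => h2 a]
    simp [mul_ite, mul_one, mul_zero, Finset.sum_ite_eq']
  have hdotc' : ∀ b, (∑ i, (∑ a, (z a * A a) * v a i) * v b i) = z b * A b :=
    fun b => hdotc (fun a => z a * A a) b
  have hGG' : (∑ i, (∑ a, (z a * A a) * v a i) * (∑ a, (z a * A a) * v a i))
      = ∑ a, (z a * A a) ^ 2 := by
    have h1 : ∀ i : Fin d, (∑ a, (z a * A a) * v a i) * (∑ a, (z a * A a) * v a i)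
        = ∑ b, (z b * A b) * ((∑ a, (z a * A a) * v a i) * v b i) := by
      intro i; rw [Finset.mul_sum]
      exact Finset.sum_congr rfl fun b _ => by ring
    rw [Finset.sum_congr rfl fun i _ => h1 i, Finset.sum_comm]
    refine Finset.sum_congr rfl fun b _ => ?_
    rw [← Finset.mul_sum, hdotc', pow_two]
  have hXp : ∀ i, X p i = z n * v n i := by
    intro i; rw [hXdef]
    show z (area p) * v (area p) i = _
    rw [hn]
  have hYq : ∀ i, Y q i = if q ∈ M then 0 else z m * v m i := by
    intro i; rw [hYdef]
    show (if q ∈ M then 0 else X q i) = _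
    by_cases h : q ∈ M
    · rw [if_pos h, if_pos h]
    · rw [if_neg h, if_neg h, hXdef]
      show z (area q) * v (area q) i = _
      rw [hq]
  have hvnm : (∑ i, v n i * v m i) = 0 := by
    rw [hvv, if_neg (fun h => hm h.symm)]
  -- the inner product computation
  have hS : (∑ i, (Fout Xt Y Q p i - X p i) * (Y q i - Fout Xt Y Q p i)) =
      (if q ∉ M then (1:ℝ) else 0) * (z m * (z m * A m))
        - (∑ a, (z a * A a) ^ 2) + z n * (z n * A n) := by
    have hsub : ∀ i, (Fout Xt Y Q p i - X p i) * (Y q i - Fout Xt Y Q p i)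
        = ((∑ a, (z a * A a) * v a i) - z n * v n i) *
          ((if q ∈ M then 0 else z m * v m i) - (∑ a, (z a * A a) * v a i)) := by
      intro i; rw [hFrep i, hXp i, hYq i]
    rw [Finset.sum_congr rfl fun i _ => hsub i]
    by_cases h : q ∈ M
    · simp only [if_pos h, if_neg (not_not_intro h)]
      calc ∑ i, ((∑ a, (z a * A a) * v a i) - z n * v n i) *
            (0 - (∑ a, (z a * A a) * v a i))
          = ∑ i, (z n * ((∑ a, (z a * A a) * v a i) * v n i)
              - (∑ a, (z a * A a) * v a i) * (∑ a, (z a * A a) * v a i)) := by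
            refine Finset.sum_congr rfl fun i _ => ?_; ring
        _ = z n * (∑ i, (∑ a, (z a * A a) * v a i) * v n i)
            - (∑ i, (∑ a, (z a * A a) * v a i) * (∑ a, (z a * A a) * v a i)) := by
            rw [Finset.sum_sub_distrib, Finset.mul_sum]
        _ = _ := by rw [hdotc', hGG']; ring
    · simp only [if_neg h, if_pos h]
      calc ∑ i, ((∑ a, (z a * A a) * v a i) - z n * v n i) *
            (z m * v m i - (∑ a, (z a * A a) * v a i))
          = ∑ i, (z m * ((∑ a, (z a * A a) * v a i) * v m i)
              - (∑ a, (z a * A a) * v a i) * (∑ a, (z a * A a) * v a i)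
              - (z n * z m) * (v n i * v m i)
              + z n * ((∑ a, (z a * A a) * v a i) * v n i)) := by
            refine Finset.sum_congr rfl fun i _ => ?_; ring
        _ = z m * (∑ i, (∑ a, (z a * A a) * v a i) * v m i)
            - (∑ i, (∑ a, (z a * A a) * v a i) * (∑ a, (z a * A a) * v a i))
            - (z n * z m) * (∑ i, v n i * v m i)
            + z n * (∑ i, (∑ a, (z a * A a) * v a i) * v n i) := by
            rw [Finset.sum_add_distrib, Finset.sum_sub_distrib, Finset.sum_sub_distrib,
              Finset.mul_sum, Finset.mul_sum, Finset.mul_sum]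
        _ = _ := by rw [hdotc', hdotc', hGG', hvnm]; ring
  -- final assembly
  have hstep : (∑ i, (2 * (Fout Xt Y Q p i - X p i)) *
      (attScore Xt Q p q * (Y q i - Fout Xt Y Q p i))) =
      2 * (attScore Xt Q p q *
        ∑ i, (Fout Xt Y Q p i - X p i) * (Y q i - Fout Xt Y Q p i)) := by
    rw [Finset.mul_sum, Finset.mul_sum]
    exact Finset.sum_congr rfl fun i _ => by ring
  rw [hstep, hS, Finset.sum_sdiff_eq_sub (Finset.subset_univ {n}), Finset.sum_singleton]
  have hcc : (∑ a, (z a * A a) ^ 2) = ∑ a, z a ^ 2 * A a ^ 2 :=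
    Finset.sum_congr rfl fun a _ => by ring
  rw [hcc]
  ring
end
end

section
/- Under the single-cluster pointwise setting, let p ∈ ℳ lie in area 𝒫_n. Then the squared reconstruction error of patch p decomposes along the orthonormal features as ‖F_p(Q) − X_p‖² = z_n² (1 − A_n(Q))² + Σ_{m≠n} z_m² A_m(Q)², where A_m(Q) = Σ_{q∈𝒰∩𝒫_m} s_{p→q}(Q) is the unmasked area attention of patch p to area 𝒫_m. -/
/-!
Single-cluster pointwise setting (shared context for Statements 2–6 of the paper):

`𝒫 = Fin P` is partitioned into areas `𝒫_1, …, 𝒫_N` via `area : Fin P → Fin N`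
(`𝒫_j = area⁻¹ j`); `v_1, …, v_N ∈ ℝ^d` are pairwise orthogonal unit features;
`z_1, …, z_N ∈ ℝ`; the sample has columns `X_q = z_{area q} v_{area q}`; positional
encodings `e_q` are unit vectors, pairwise orthogonal and orthogonal to every feature;
`ℳ ⊂ 𝒫` is the mask set, `𝒰 = 𝒫 ∖ ℳ`; `Y = mask(X)` zeroes masked columns;
`X̃ = Y + E`; `s_{p→q}(Q)` is the softmax attention on `X̃`;
`F_p(Q) = Σ_q s_{p→q}(Q) Y_q`; `ℓ(Q) = (1/2) Σ_{p∈ℳ} ‖F_p(Q) − X_p‖²`;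
`A_m(Q) = Σ_{q ∈ 𝒰 ∩ 𝒫_m} s_{p→q}(Q)` is the unmasked area attention.

The gradient identities `e_pᵀ(−∇_Q ℓ)v` and `e_pᵀ(−∇_Q ℓ)e_q` are expressed via the
Fréchet derivative of `ℓ` paired against the rank-one directions `e_p vᵀ` resp. `e_p e_qᵀ`
(for a matrix `M` one has `aᵀ M b = ⟨M, a bᵀ⟩_F`).
-/

noncomputable section

open Finset

variable {d P N : ℕ}

/-- for a masked patch `p` in area `𝒫_n`, the squared reconstruction error
decomposes along the orthonormal features as
`‖F_p(Q) − X_p‖² = z_n²(1−A_n(Q))² + Σ_{m≠n} z_m² A_m(Q)²`. -/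
theorem reconstruction_error_decomposition (area : Fin P → Fin N)
    (v : Fin N → Fin d → ℝ) (z : Fin N → ℝ) (e : Fin P → Fin d → ℝ)
    (hv_unit : ∀ n, ∑ i, v n i ^ 2 = 1)
    (hv_orth : ∀ n n', n ≠ n' → ∑ i, v n i * v n' i = 0)
    (he_unit : ∀ p, ∑ i, e p i ^ 2 = 1)
    (he_orth : ∀ p q, p ≠ q → ∑ i, e p i * e q i = 0)
    (hev : ∀ p n, ∑ i, e p i * v n i = 0)
    (M : Finset (Fin P)) (Q : Fin d → Fin d → ℝ)
    (p : Fin P) (hp : p ∈ M) (n : Fin N) (hn : area p = n) :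
    (let X := Xcol area v z;
     let Y := Ycol M X;
     let Xt := XtCol e Y;
     let A := areaAttn area M Xt Q p;
     ∑ i, (Fout Xt Y Q p i - X p i) ^ 2 =
       z n ^ 2 * (1 - A n) ^ 2 + ∑ m ∈ Finset.univ \ {n}, z m ^ 2 * A m ^ 2) := by
  simp only []
  set X := Xcol area v z with hX
  set Y := Ycol M X with hY
  set Xt := XtCol e Y with hXt
  set A := areaAttn area M Xt Q p with hA
  set s : Fin P → ℝ := attScore Xt Q p with hs
  set c : Fin N → ℝ := fun m => A m * z m - if m = n then z n else 0 with hc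
  have key : ∀ i, Fout Xt Y Q p i - X p i = ∑ m, c m * v m i := by
    intro i
    have h1 : Fout Xt Y Q p i = ∑ m, A m * (z m * v m i) := by
      have hinner : ∀ m : Fin N,
          A m * (z m * v m i)
            = ∑ q ∈ Finset.univ.filter (fun q => q ∉ M ∧ area q = m), s q * Y q i := by
        intro m
        rw [hA, areaAttn, Finset.sum_mul]
        refine Finset.sum_congr rfl ?_
        intro q hq
        simp only [Finset.mem_filter] at hq
        simp [hY, Ycol, hX, Xcol, hq.2.1, hq.2.2, hs]
      have h2 : ∑ m, A m * (z m * v m i)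
          = ∑ q ∈ Finset.univ.filter (fun q => q ∉ M), s q * Y q i := by
        rw [Finset.sum_congr rfl (fun m _ => hinner m)]
        have := Finset.sum_fiberwise (Finset.univ.filter (fun q => q ∉ M)) area
          (fun q => s q * Y q i)
        rw [← this]
        refine Finset.sum_congr rfl ?_
        intro m _
        rw [Finset.filter_filter]
      rw [h2, Fout]
      rw [Finset.sum_filter]
      refine Finset.sum_congr rfl ?_
      intro q _
      by_cases hq : q ∈ M
      · simp [hq, hY, Ycol]
      · simp [hq, hs]
    have h3 : X p i = ∑ m, (if m = n then z n else 0) * v m i := by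
      simp [hX, Xcol, hn, ite_mul, Finset.sum_ite_eq']
    rw [h1, h3, ← Finset.sum_sub_distrib]
    refine Finset.sum_congr rfl ?_
    intro m _
    rw [hc]; ring
  have horth : ∀ m m' : Fin N, ∑ i, v m i * v m' i = if m = m' then 1 else 0 := by
    intro m m'
    by_cases h : m = m'
    · subst h
      simp only [if_pos rfl]
      rw [← hv_unit m]
      exact Finset.sum_congr rfl (fun i _ => (sq (v m i)).symm)
    · simp [h, hv_orth m m' h]
  calc ∑ i, (Fout Xt Y Q p i - X p i) ^ 2
      = ∑ i, (∑ m, c m * v m i) * (∑ m', c m' * v m' i) := by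
        refine Finset.sum_congr rfl ?_
        intro i _
        rw [key i, sq]
    _ = ∑ m, ∑ m', (c m * c m') * ∑ i, v m i * v m' i := by
        simp_rw [Finset.sum_mul, Finset.mul_sum]
        rw [Finset.sum_comm]
        refine Finset.sum_congr rfl fun m _ => ?_
        rw [Finset.sum_comm]
        refine Finset.sum_congr rfl fun m' _ => ?_
        exact Finset.sum_congr rfl fun i _ => by ring
    _ = ∑ m, c m ^ 2 := by
        refine Finset.sum_congr rfl ?_
        intro m _
        simp_rw [horth]
        simp [mul_ite, mul_one, mul_zero, Finset.sum_ite_eq, sq]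
    _ = c n ^ 2 + ∑ m ∈ Finset.univ \ {n}, c m ^ 2 := by
        rw [Finset.sum_eq_add_sum_sdiff_singleton_of_mem (Finset.mem_univ n)]
    _ = z n ^ 2 * (1 - A n) ^ 2 + ∑ m ∈ Finset.univ \ {n}, z m ^ 2 * A m ^ 2 := by
        congr 1
        · have hcn : c n = A n * z n - z n := by simp [hc]
          rw [hcn]; ring
        · refine Finset.sum_congr rfl ?_
          intro m hm
          simp only [Finset.mem_sdiff, Finset.mem_singleton] at hm
          have hcm : c m = A m * z m := by simp [hc, hm.2]
          rw [hcm]; ring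
end
end

section
/- Let S be a hypergeometric random variable Hyper(m, D, M) with 1 ≤ m, D ≤ M, i.e., S counts the number of marked elements when drawing m elements without replacement from a population of size M containing exactly D marked elements. Set μ_M = D/M. Then for every t > 0, P(|S − m·μ_M| > t) ≤ 2·exp( −t² / (4·m·μ_M + 2t) ). -/
/-!
STATEMENT 8: Exponential tail bound for the hypergeometric distribution
`Hyper(m, D, M)` (Greene–Wellner): with `μ_M = D/M`, for all `t > 0`,
`P(|S − m μ_M| > t) ≤ 2 exp(−t² / (4 m μ_M + 2t))`.

The hypergeometric pmf is `P(S = s) = C(D,s) C(M−D, m−s) / C(M,m)`; it vanishes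
outside `s ≤ m`, so the probability of the event `|S − m μ_M| > t` is the sum of the
pmf over `s ∈ {0,…,m}` lying in the event.
-/

open Finset

set_option maxHeartbeats 1000000



/-- `C(D,k) M^k ≤ C(M,k) D^k` for `D ≤ M`. -/
lemma hg_choose_pow (D M : ℕ) (hDM : D ≤ M) :
    ∀ k, D.choose k * M ^ k ≤ M.choose k * D ^ k := by
  intro k
  induction k with
  | zero => simp
  | succ k ih =>
    have h1 : D.choose (k+1) * (k+1) = D.choose k * (D - k) := Nat.choose_succ_right_eq D k
    have h2 : M.choose (k+1) * (k+1) = M.choose k * (M - k) := Nat.choose_succ_right_eq M k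
    have key : (D - k) * M ≤ (M - k) * D := by
      have : D * M - k * M ≤ D * M - k * D :=
        Nat.sub_le_sub_left (Nat.mul_le_mul_left k hDM) _
      calc (D - k) * M = D * M - k * M := by rw [Nat.sub_mul]
        _ ≤ D * M - k * D := this
        _ = M * D - k * D := by rw [Nat.mul_comm D M]
        _ = (M - k) * D := by rw [Nat.sub_mul]
    have e1 : D.choose (k+1) * M ^ (k+1) * (k+1) = (D.choose k * M ^ k) * ((D - k) * M) := by
      calc D.choose (k+1) * M ^ (k+1) * (k+1) = (D.choose (k+1) * (k+1)) * M ^ (k+1) := by ring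
        _ = (D.choose k * (D - k)) * M ^ (k+1) := by rw [h1]
        _ = (D.choose k * M ^ k) * ((D - k) * M) := by rw [pow_succ]; ring
    have e2 : M.choose (k+1) * D ^ (k+1) * (k+1) = (M.choose k * D ^ k) * ((M - k) * D) := by
      calc M.choose (k+1) * D ^ (k+1) * (k+1) = (M.choose (k+1) * (k+1)) * D ^ (k+1) := by ring
        _ = (M.choose k * (M - k)) * D ^ (k+1) := by rw [h2]
        _ = (M.choose k * D ^ k) * ((M - k) * D) := by rw [pow_succ]; ring
    have : D.choose (k+1) * M ^ (k+1) * (k+1) ≤ M.choose (k+1) * D ^ (k+1) * (k+1) := by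
      rw [e1, e2]; exact Nat.mul_le_mul ih key
    exact Nat.le_of_mul_le_mul_right this (Nat.succ_pos k)

/-- Vandermonde in range form. -/
lemma hg_vandermonde (a b n : ℕ) :
    ∑ i ∈ range (n+1), a.choose i * b.choose (n - i) = (a + b).choose n := by
  rw [Nat.add_choose_eq]
  rw [Finset.Nat.sum_antidiagonal_eq_sum_range_succ (fun i j => a.choose i * b.choose j)]
/-- Factorial-moment identity for the hypergeometric weights. -/
lemma hg_fact_moment (m D M k : ℕ) (hk : k ≤ m) (hDM : D ≤ M) :
    ∑ s ∈ range (m+1), D.choose s * (M - D).choose (m - s) * s.choose k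
      = D.choose k * (M - k).choose (m - k) := by
  by_cases hkD : k ≤ D
  · have hsub : Finset.Ico k (m+1) ⊆ range (m+1) := by
      intro x hx; simp only [Finset.mem_Ico] at hx; simp [hx.2]
    have hzero : ∀ s ∈ range (m+1), s ∉ Finset.Ico k (m+1) →
        D.choose s * (M - D).choose (m - s) * s.choose k = 0 := by
      intro s hs hns
      simp only [Finset.mem_range] at hs
      simp only [Finset.mem_Ico] at hns
      have : s < k := by omega
      simp [Nat.choose_eq_zero_of_lt this]
    rw [← Finset.sum_subset hsub hzero]
    rw [Finset.sum_Ico_eq_sum_range]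
    have hlen : m + 1 - k = (m - k) + 1 := by omega
    rw [hlen]
    have hterm : ∀ j, D.choose (k + j) * (M - D).choose (m - (k + j)) * (k + j).choose k
        = D.choose k * ((D - k).choose j * (M - D).choose ((m - k) - j)) := by
      intro j
      have hms : m - (k + j) = (m - k) - j := by omega
      rw [hms]
      by_cases hj : k + j ≤ D
      · have := Nat.choose_mul (n := D) (Nat.le_add_right k j)
        have h2 : D.choose (k + j) * (k + j).choose k = D.choose k * (D - k).choose j := by
          simpa [Nat.add_sub_cancel_left] using this
        calc D.choose (k + j) * (M - D).choose ((m - k) - j) * (k + j).choose k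
            = (D.choose (k + j) * (k + j).choose k) * (M - D).choose ((m - k) - j) := by ring
          _ = (D.choose k * (D - k).choose j) * (M - D).choose ((m - k) - j) := by rw [h2]
          _ = D.choose k * ((D - k).choose j * (M - D).choose ((m - k) - j)) := by ring
      · have h1 : D.choose (k + j) = 0 := Nat.choose_eq_zero_of_lt (by omega)
        have h2 : (D - k).choose j = 0 := Nat.choose_eq_zero_of_lt (by omega)
        simp [h1, h2]
    calc ∑ j ∈ range ((m - k) + 1),
            D.choose (k + j) * (M - D).choose (m - (k + j)) * (k + j).choose k
        = ∑ j ∈ range ((m - k) + 1),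
            D.choose k * ((D - k).choose j * (M - D).choose ((m - k) - j)) := by
          exact Finset.sum_congr rfl (fun j _ => hterm j)
      _ = D.choose k * ∑ j ∈ range ((m - k) + 1),
            (D - k).choose j * (M - D).choose ((m - k) - j) := by rw [Finset.mul_sum]
      _ = D.choose k * ((D - k) + (M - D)).choose (m - k) := by rw [hg_vandermonde]
      _ = D.choose k * (M - k).choose (m - k) := by
          congr 2; omega
  · have hR : D.choose k = 0 := Nat.choose_eq_zero_of_lt (by omega)
    rw [hR, Nat.zero_mul]
    apply Finset.sum_eq_zero
    intro s _
    by_cases hs : s < k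
    · simp [Nat.choose_eq_zero_of_lt hs]
    · have : D < s := by omega
      simp [Nat.choose_eq_zero_of_lt this]






/-- Reflected factorial-moment identity. -/
lemma hg_fact_moment' (m D M k : ℕ) (hk : k ≤ m) (hDM : D ≤ M) :
    ∑ s ∈ range (m+1), D.choose s * (M - D).choose (m - s) * (m - s).choose k
      = (M - D).choose k * (M - k).choose (m - k) := by
  have base := hg_fact_moment m (M - D) M k hk (Nat.sub_le M D)
  have hMD : M - (M - D) = D := by omega
  rw [hMD] at base
  rw [← base]
  rw [← Finset.sum_range_reflect (fun s => (M - D).choose s * D.choose (m - s) * s.choose k) (m+1)]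
  apply Finset.sum_congr rfl
  intro j hj
  simp only [Finset.mem_range] at hj
  have h1 : m + 1 - 1 - j = m - j := by omega
  have h2 : m - (m - j) = j := by omega
  rw [h1, h2]
  ring

/-- Real factorial moment bound: `E[C(S,k)] ≤ C(m,k) (D/M)^k`. -/
lemma hg_moment_le (m D M k : ℕ) (hk : k ≤ m) (hmM : m ≤ M) (hDM : D ≤ M) (hM : 0 < M) :
    ∑ s ∈ range (m+1),
        (D.choose s * (M - D).choose (m - s) : ℝ) / (M.choose m) * (s.choose k : ℝ)
      ≤ (m.choose k : ℝ) * ((D : ℝ) / M) ^ k := by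
  have hCm : (0:ℝ) < (M.choose m : ℝ) := by exact_mod_cast Nat.choose_pos hmM
  have hMk : (0:ℝ) < (M:ℝ) ^ k := by positivity
  have nat_key : D.choose k * (M - k).choose (m - k) * M ^ k
      ≤ m.choose k * D ^ k * M.choose m := by
    calc D.choose k * (M - k).choose (m - k) * M ^ k
        = (D.choose k * M ^ k) * (M - k).choose (m - k) := by ring
      _ ≤ (M.choose k * D ^ k) * (M - k).choose (m - k) :=
          Nat.mul_le_mul_right _ (hg_choose_pow D M hDM k)
      _ = (M.choose k * (M - k).choose (m - k)) * D ^ k := by ring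
      _ = (M.choose m * m.choose k) * D ^ k := by rw [← Nat.choose_mul (n := M) hk]
      _ = m.choose k * D ^ k * M.choose m := by ring
  have hsum : ∑ s ∈ range (m+1),
      (D.choose s * (M - D).choose (m - s) : ℝ) / (M.choose m) * (s.choose k : ℝ)
      = ((D.choose k * (M - k).choose (m - k) : ℕ) : ℝ) / (M.choose m) := by
    rw [← hg_fact_moment m D M k hk hDM]
    rw [Nat.cast_sum, Finset.sum_div]
    apply Finset.sum_congr rfl
    intro s _
    push_cast
    ring
  rw [hsum, div_pow, mul_div_assoc' , div_le_div_iff₀ hCm hMk]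
  calc ((D.choose k * (M - k).choose (m - k) : ℕ) : ℝ) * (M:ℝ) ^ k
      = ((D.choose k * (M - k).choose (m - k) * M ^ k : ℕ) : ℝ) := by push_cast; ring
    _ ≤ ((m.choose k * D ^ k * M.choose m : ℕ) : ℝ) := by exact_mod_cast nat_key
    _ = (m.choose k : ℝ) * (D:ℝ) ^ k * (M.choose m : ℝ) := by push_cast; ring

/-- Real factorial moment bound for the complement: `E[C(m-S,k)] ≤ C(m,k) ((M-D)/M)^k`. -/
lemma hg_moment_le' (m D M k : ℕ) (hk : k ≤ m) (hmM : m ≤ M) (hDM : D ≤ M) (hM : 0 < M) :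
    ∑ s ∈ range (m+1),
        (D.choose s * (M - D).choose (m - s) : ℝ) / (M.choose m) * ((m - s).choose k : ℝ)
      ≤ (m.choose k : ℝ) * (((M - D : ℕ) : ℝ) / M) ^ k := by
  have hCm : (0:ℝ) < (M.choose m : ℝ) := by exact_mod_cast Nat.choose_pos hmM
  have hMk : (0:ℝ) < (M:ℝ) ^ k := by positivity
  have nat_key : (M - D).choose k * (M - k).choose (m - k) * M ^ k
      ≤ m.choose k * (M - D) ^ k * M.choose m := by
    calc (M - D).choose k * (M - k).choose (m - k) * M ^ k
        = ((M - D).choose k * M ^ k) * (M - k).choose (m - k) := by ring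
      _ ≤ (M.choose k * (M - D) ^ k) * (M - k).choose (m - k) :=
          Nat.mul_le_mul_right _ (hg_choose_pow (M - D) M (Nat.sub_le M D) k)
      _ = (M.choose k * (M - k).choose (m - k)) * (M - D) ^ k := by ring
      _ = (M.choose m * m.choose k) * (M - D) ^ k := by rw [← Nat.choose_mul (n := M) hk]
      _ = m.choose k * (M - D) ^ k * M.choose m := by ring
  have hsum : ∑ s ∈ range (m+1),
      (D.choose s * (M - D).choose (m - s) : ℝ) / (M.choose m) * ((m - s).choose k : ℝ)
      = (((M - D).choose k * (M - k).choose (m - k) : ℕ) : ℝ) / (M.choose m) := by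
    rw [← hg_fact_moment' m D M k hk hDM]
    rw [Nat.cast_sum, Finset.sum_div]
    apply Finset.sum_congr rfl
    intro s _
    push_cast
    ring
  rw [hsum, div_pow, mul_div_assoc', div_le_div_iff₀ hCm hMk]
  calc (((M - D).choose k * (M - k).choose (m - k) : ℕ) : ℝ) * (M:ℝ) ^ k
      = (((M - D).choose k * (M - k).choose (m - k) * M ^ k : ℕ) : ℝ) := by push_cast; ring
    _ ≤ ((m.choose k * (M - D) ^ k * M.choose m : ℕ) : ℝ) := by exact_mod_cast nat_key
    _ = (m.choose k : ℝ) * ((M - D : ℕ) : ℝ) ^ k * (M.choose m : ℝ) := by push_cast; ring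






/-- MGF bound, upper version: for `x ≥ 1`, `E[x^S] ≤ (1 + μ(x-1))^m`. -/
lemma hg_mgf_upper (m D M : ℕ) (hmM : m ≤ M) (hDM : D ≤ M) (hM : 0 < M)
    (x : ℝ) (hx : 1 ≤ x) :
    ∑ s ∈ range (m+1),
        (D.choose s * (M - D).choose (m - s) : ℝ) / (M.choose m) * x ^ s
      ≤ (1 + (D : ℝ) / M * (x - 1)) ^ m := by
  have hy : 0 ≤ x - 1 := by linarith
  have hp : ∀ s ∈ range (m+1), (0:ℝ) ≤ (D.choose s * (M - D).choose (m - s) : ℝ) / (M.choose m) := by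
    intro s _; positivity
  have hxs : ∀ s ∈ range (m+1),
      x ^ s = ∑ k ∈ range (m+1), (x - 1) ^ k * (s.choose k : ℝ) := by
    intro s hs
    simp only [Finset.mem_range] at hs
    have h1 : x = (x - 1) + 1 := by ring
    have e : x ^ s = ∑ k ∈ range (s+1), (x - 1) ^ k * (s.choose k : ℝ) := by
      conv_lhs => rw [h1]
      rw [add_pow]
      simp only [one_pow, mul_one]
    rw [e]
    apply Finset.sum_subset
    · intro i hi; simp only [Finset.mem_range] at *; omega
    · intro i _ hi
      simp only [Finset.mem_range] at hi
      have : s < i := by omega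
      simp [Nat.choose_eq_zero_of_lt this]
  calc ∑ s ∈ range (m+1), (D.choose s * (M - D).choose (m - s) : ℝ) / (M.choose m) * x ^ s
      = ∑ s ∈ range (m+1), ∑ k ∈ range (m+1),
          (x - 1) ^ k * ((D.choose s * (M - D).choose (m - s) : ℝ) / (M.choose m) * (s.choose k : ℝ)) := by
        apply Finset.sum_congr rfl
        intro s hs
        rw [hxs s hs, Finset.mul_sum]
        apply Finset.sum_congr rfl
        intro k _; ring
    _ = ∑ k ∈ range (m+1), (x - 1) ^ k * ∑ s ∈ range (m+1),
          (D.choose s * (M - D).choose (m - s) : ℝ) / (M.choose m) * (s.choose k : ℝ) := by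
        rw [Finset.sum_comm]
        apply Finset.sum_congr rfl
        intro k _
        rw [Finset.mul_sum]
    _ ≤ ∑ k ∈ range (m+1), (x - 1) ^ k * ((m.choose k : ℝ) * ((D : ℝ) / M) ^ k) := by
        apply Finset.sum_le_sum
        intro k hk
        simp only [Finset.mem_range] at hk
        exact mul_le_mul_of_nonneg_left
          (hg_moment_le m D M k (by omega) hmM hDM hM) (by positivity)
    _ = (1 + (D : ℝ) / M * (x - 1)) ^ m := by
        rw [add_comm (1:ℝ), add_pow]
        simp only [one_pow, mul_one]
        apply Finset.sum_congr rfl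
        intro k _
        rw [mul_pow]
        ring

/-- MGF bound, lower version: for `0 < x ≤ 1`, `E[x^S] ≤ (1 - μ(1-x))^m`. -/
lemma hg_mgf_lower (m D M : ℕ) (hmM : m ≤ M) (hDM : D ≤ M) (hM : 0 < M)
    (x : ℝ) (hx0 : 0 < x) (hx : x ≤ 1) :
    ∑ s ∈ range (m+1),
        (D.choose s * (M - D).choose (m - s) : ℝ) / (M.choose m) * x ^ s
      ≤ (1 - (D : ℝ) / M * (1 - x)) ^ m := by
  set y : ℝ := (1 - x) / x with hy_def
  have hy : 0 ≤ y := div_nonneg (by linarith) hx0.le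
  have hxy : x * (y + 1) = 1 := by rw [hy_def]; field_simp; ring
  have hxs : ∀ s ∈ range (m+1),
      x ^ s = x ^ m * ∑ k ∈ range (m+1), y ^ k * ((m - s).choose k : ℝ) := by
    intro s hs
    simp only [Finset.mem_range] at hs
    have hsum : ∑ k ∈ range (m+1), y ^ k * ((m - s).choose k : ℝ) = (y + 1) ^ (m - s) := by
      rw [add_pow]
      simp only [one_pow, mul_one]
      symm
      apply Finset.sum_subset
      · intro i hi; simp only [Finset.mem_range] at *; omega
      · intro i _ hi
        simp only [Finset.mem_range] at hi
        have : m - s < i := by omega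
        simp [Nat.choose_eq_zero_of_lt this]
    rw [hsum]
    have hms : m = s + (m - s) := by omega
    calc x ^ s = x ^ s * (x * (y+1)) ^ (m - s) := by rw [hxy]; simp
      _ = x ^ m * (y + 1) ^ (m - s) := by
          rw [mul_pow, ← mul_assoc, ← pow_add, ← hms]
  calc ∑ s ∈ range (m+1), (D.choose s * (M - D).choose (m - s) : ℝ) / (M.choose m) * x ^ s
      = ∑ s ∈ range (m+1), ∑ k ∈ range (m+1), x ^ m * y ^ k *
          ((D.choose s * (M - D).choose (m - s) : ℝ) / (M.choose m) * ((m - s).choose k : ℝ)) := by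
        apply Finset.sum_congr rfl
        intro s hs
        rw [hxs s hs, Finset.mul_sum, Finset.mul_sum]
        apply Finset.sum_congr rfl
        intro k _; ring
    _ = ∑ k ∈ range (m+1), ∑ s ∈ range (m+1), x ^ m * y ^ k *
          ((D.choose s * (M - D).choose (m - s) : ℝ) / (M.choose m) * ((m - s).choose k : ℝ)) :=
        Finset.sum_comm
    _ = x ^ m * ∑ k ∈ range (m+1), y ^ k * ∑ s ∈ range (m+1),
          (D.choose s * (M - D).choose (m - s) : ℝ) / (M.choose m) * ((m - s).choose k : ℝ) := by
        rw [Finset.mul_sum]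
        apply Finset.sum_congr rfl
        intro k _
        rw [Finset.mul_sum, Finset.mul_sum]
        apply Finset.sum_congr rfl
        intro s _; ring
    _ ≤ x ^ m * ∑ k ∈ range (m+1), y ^ k * ((m.choose k : ℝ) * (((M - D : ℕ) : ℝ) / M) ^ k) := by
        apply mul_le_mul_of_nonneg_left _ (by positivity)
        apply Finset.sum_le_sum
        intro k hk
        simp only [Finset.mem_range] at hk
        exact mul_le_mul_of_nonneg_left
          (hg_moment_le' m D M k (by omega) hmM hDM hM) (by positivity)
    _ = x ^ m * (1 + (((M - D : ℕ) : ℝ) / M) * y) ^ m := by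
        congr 1
        rw [add_comm (1:ℝ), add_pow]
        simp only [one_pow, mul_one]
        apply Finset.sum_congr rfl
        intro k _
        rw [mul_pow]
        ring
    _ = (1 - (D : ℝ) / M * (1 - x)) ^ m := by
        rw [← mul_pow]
        congr 1
        have hMD : ((M - D : ℕ) : ℝ) = (M : ℝ) - D := by
          push_cast [hDM]; ring
        have hMne : (M:ℝ) ≠ 0 := by positivity
        have hxne : x ≠ 0 := ne_of_gt hx0
        rw [hMD, hy_def]
        field_simp
        ring

lemma hg_exp_quad {x : ℝ} (h0 : 0 ≤ x) (h1 : x ≤ 1) :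
    Real.exp x ≤ 1 + x + x ^ 2 ∧ Real.exp (-x) ≤ 1 - x + x ^ 2 := by
  have hb1 := Real.exp_bound (x := x) (by rw [abs_of_nonneg h0]; exact h1) (n := 2) (by norm_num)
  have hb2 := Real.exp_bound (x := -x) (by rw [abs_neg, abs_of_nonneg h0]; exact h1) (n := 2) (by norm_num)
  have hs1 : ∑ m ∈ Finset.range 2, x ^ m / m.factorial = 1 + x := by
    simp [Finset.sum_range_succ]
  have hs2 : ∑ m ∈ Finset.range 2, (-x) ^ m / m.factorial = 1 - x := by
    simp [Finset.sum_range_succ]; ring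
  rw [hs1] at hb1
  rw [hs2] at hb2
  rw [abs_sub_le_iff] at hb1 hb2
  have hax : |x| = x := abs_of_nonneg h0
  have hax2 : |(-x)| = x := by rw [abs_neg]; exact hax
  have h1' := hb1.1
  have h2' := hb2.1
  rw [hax] at h1'
  rw [hax2] at h2'
  norm_num [Nat.factorial] at h1' h2'
  constructor
  · nlinarith [sq_nonneg x]
  · nlinarith [sq_nonneg x]








theorem hypergeometric_tail_bound (m D M : ℕ)
    (hm : 1 ≤ m) (hD : 1 ≤ D) (hmM : m ≤ M) (hDM : D ≤ M)
    (t : ℝ) (ht : 0 < t) :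
    (∑ s ∈ Finset.range (m + 1),
        if t < |(s : ℝ) - m * ((D : ℝ) / M)| then
          (Nat.choose D s * Nat.choose (M - D) (m - s) : ℝ) / Nat.choose M m
        else 0) ≤
      2 * Real.exp (-t ^ 2 / (4 * m * ((D : ℝ) / M) + 2 * t)) := by
  have hM : 0 < M := lt_of_lt_of_le hD hDM
  set μ : ℝ := (D : ℝ) / M with hμ_def
  have hμ0 : 0 < μ := by
    apply div_pos <;> exact_mod_cast (by omega : (0:ℕ) < _)
  have hμ1 : μ ≤ 1 := by
    rw [hμ_def, div_le_one (by exact_mod_cast hM)]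
    exact_mod_cast hDM
  set a : ℝ := (m : ℝ) * μ with ha_def
  have ha : 0 < a := by
    apply mul_pos _ hμ0
    exact_mod_cast hm
  set lam : ℝ := t / (2 * a + t) with hlam_def
  have hden : 0 < 2 * a + t := by linarith
  have hlam0 : 0 < lam := div_pos ht hden
  have hlam1 : lam ≤ 1 := by
    rw [hlam_def, div_le_one hden]; linarith
  set p : ℕ → ℝ := fun s => (D.choose s * (M - D).choose (m - s) : ℝ) / (M.choose m) with hp_def
  have hmgf_up := hg_mgf_upper m D M hmM hDM hM
  have hmgf_dn := hg_mgf_lower m D M hmM hDM hM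
  clear_value p lam a μ
  have hp0 : ∀ s, 0 ≤ p s := by intro s; rw [hp_def]; positivity
  obtain ⟨hequp, heqdn⟩ := hg_exp_quad hlam0.le hlam1
  -- upper chain : E[(e^lam)^S] ≤ exp (a lam + a lam²)
  have chain_up : ∑ s ∈ range (m+1), p s * (Real.exp lam) ^ s
      ≤ Real.exp (a * lam + a * lam ^ 2) := by
    have h1 := hmgf_up (Real.exp lam) (Real.one_le_exp hlam0.le)
    rw [← hμ_def] at h1
    have hbase0 : (0:ℝ) ≤ 1 + μ * (Real.exp lam - 1) := by
      nlinarith [Real.one_le_exp hlam0.le]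
    have h2 : (1 + μ * (Real.exp lam - 1)) ^ m ≤ Real.exp (a * (Real.exp lam - 1)) := by
      have hle : 1 + μ * (Real.exp lam - 1) ≤ Real.exp (μ * (Real.exp lam - 1)) := by
        have := Real.add_one_le_exp (μ * (Real.exp lam - 1)); linarith
      calc (1 + μ * (Real.exp lam - 1)) ^ m
          ≤ (Real.exp (μ * (Real.exp lam - 1))) ^ m := pow_le_pow_left₀ hbase0 hle m
        _ = Real.exp ((m : ℝ) * (μ * (Real.exp lam - 1))) := (Real.exp_nat_mul _ m).symm
        _ = Real.exp (a * (Real.exp lam - 1)) := by rw [ha_def]; ring_nf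
    have h3 : a * (Real.exp lam - 1) ≤ a * lam + a * lam ^ 2 := by nlinarith
    calc ∑ s ∈ range (m+1), p s * (Real.exp lam) ^ s
        ≤ (1 + μ * (Real.exp lam - 1)) ^ m := by simp only [hp_def]; exact h1
      _ ≤ Real.exp (a * (Real.exp lam - 1)) := h2
      _ ≤ Real.exp (a * lam + a * lam ^ 2) := Real.exp_le_exp.mpr h3
  have chain_dn : ∑ s ∈ range (m+1), p s * (Real.exp (-lam)) ^ s
      ≤ Real.exp (-(a * lam) + a * lam ^ 2) := by
    have h1 := hmgf_dn (Real.exp (-lam)) (Real.exp_pos _)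
      (Real.exp_le_one_iff.mpr (by linarith))
    rw [← hμ_def] at h1
    have hexple : Real.exp (-lam) ≤ 1 := Real.exp_le_one_iff.mpr (by linarith)
    have hbase0 : (0:ℝ) ≤ 1 - μ * (1 - Real.exp (-lam)) := by
      have h := Real.exp_pos (-lam)
      nlinarith
    have h2' : (1 - μ * (1 - Real.exp (-lam))) ^ m
        ≤ Real.exp (a * (Real.exp (-lam) - 1)) := by
      have hle : 1 - μ * (1 - Real.exp (-lam)) ≤ Real.exp (μ * (Real.exp (-lam) - 1)) := by
        have := Real.add_one_le_exp (μ * (Real.exp (-lam) - 1)); linarith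
      calc (1 - μ * (1 - Real.exp (-lam))) ^ m
          ≤ (Real.exp (μ * (Real.exp (-lam) - 1))) ^ m := pow_le_pow_left₀ hbase0 hle m
        _ = Real.exp ((m : ℝ) * (μ * (Real.exp (-lam) - 1))) := (Real.exp_nat_mul _ m).symm
        _ = Real.exp (a * (Real.exp (-lam) - 1)) := by rw [ha_def]; ring_nf
    have h3 : a * (Real.exp (-lam) - 1) ≤ -(a * lam) + a * lam ^ 2 := by nlinarith
    calc ∑ s ∈ range (m+1), p s * (Real.exp (-lam)) ^ s
        ≤ (1 - μ * (1 - Real.exp (-lam))) ^ m := by simp only [hp_def]; exact h1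
      _ ≤ Real.exp (a * (Real.exp (-lam) - 1)) := h2'
      _ ≤ Real.exp (-(a * lam) + a * lam ^ 2) := Real.exp_le_exp.mpr h3
  -- termwise bound
  have hterm : ∀ s ∈ range (m+1),
      (if t < |(s : ℝ) - a| then p s else 0)
      ≤ p s * (Real.exp lam) ^ s * Real.exp (-(lam * (a + t)))
        + p s * (Real.exp (-lam)) ^ s * Real.exp (lam * (a - t)) := by
    intro s _
    have e1 : p s * (Real.exp lam) ^ s * Real.exp (-(lam * (a + t)))
        = p s * Real.exp (lam * ((s : ℝ) - (a + t))) := by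
      rw [← Real.exp_nat_mul, mul_assoc, ← Real.exp_add]
      congr 1
      ring
    have e2 : p s * (Real.exp (-lam)) ^ s * Real.exp (lam * (a - t))
        = p s * Real.exp (lam * ((a - t) - (s : ℝ))) := by
      rw [← Real.exp_nat_mul, mul_assoc, ← Real.exp_add]
      congr 1
      ring
    have hpos1 : 0 ≤ p s * (Real.exp lam) ^ s * Real.exp (-(lam * (a + t))) := by
      have := hp0 s; positivity
    have hpos2 : 0 ≤ p s * (Real.exp (-lam)) ^ s * Real.exp (lam * (a - t)) := by
      have := hp0 s; positivity
    by_cases hcond : t < |(s : ℝ) - a|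
    · rw [if_pos hcond, e1, e2]
      rcases lt_abs.mp hcond with hup | hdn
      · have h1 : (1:ℝ) ≤ Real.exp (lam * ((s : ℝ) - (a + t))) := by
          apply Real.one_le_exp
          nlinarith
        have hA : p s * 1 ≤ p s * Real.exp (lam * ((s : ℝ) - (a + t))) :=
          mul_le_mul_of_nonneg_left h1 (hp0 s)
        have hB : 0 ≤ p s * Real.exp (lam * ((a - t) - (s : ℝ))) :=
          mul_nonneg (hp0 s) (Real.exp_pos _).le
        linarith
      · have h1 : (1:ℝ) ≤ Real.exp (lam * ((a - t) - (s : ℝ))) := by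
          apply Real.one_le_exp
          nlinarith
        have hA : p s * 1 ≤ p s * Real.exp (lam * ((a - t) - (s : ℝ))) :=
          mul_le_mul_of_nonneg_left h1 (hp0 s)
        have hB : 0 ≤ p s * Real.exp (lam * ((s : ℝ) - (a + t))) :=
          mul_nonneg (hp0 s) (Real.exp_pos _).le
        linarith
    · rw [if_neg hcond]
      exact add_nonneg hpos1 hpos2
  have hsplit : (∑ s ∈ range (m + 1), if t < |(s : ℝ) - a| then p s else 0)
      ≤ (∑ s ∈ range (m+1), p s * (Real.exp lam) ^ s) * Real.exp (-(lam * (a + t)))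
        + (∑ s ∈ range (m+1), p s * (Real.exp (-lam)) ^ s) * Real.exp (lam * (a - t)) := by
    rw [Finset.sum_mul, Finset.sum_mul, ← Finset.sum_add_distrib]
    exact Finset.sum_le_sum hterm
  have h_up : (∑ s ∈ range (m+1), p s * (Real.exp lam) ^ s) * Real.exp (-(lam * (a + t)))
      ≤ Real.exp (a * lam ^ 2 - lam * t) := by
    calc (∑ s ∈ range (m+1), p s * (Real.exp lam) ^ s) * Real.exp (-(lam * (a + t)))
        ≤ Real.exp (a * lam + a * lam ^ 2) * Real.exp (-(lam * (a + t))) :=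
          mul_le_mul_of_nonneg_right chain_up (Real.exp_pos _).le
      _ = Real.exp (a * lam ^ 2 - lam * t) := by rw [← Real.exp_add]; congr 1; ring
  have h_dn : (∑ s ∈ range (m+1), p s * (Real.exp (-lam)) ^ s) * Real.exp (lam * (a - t))
      ≤ Real.exp (a * lam ^ 2 - lam * t) := by
    calc (∑ s ∈ range (m+1), p s * (Real.exp (-lam)) ^ s) * Real.exp (lam * (a - t))
        ≤ Real.exp (-(a * lam) + a * lam ^ 2) * Real.exp (lam * (a - t)) :=
          mul_le_mul_of_nonneg_right chain_dn (Real.exp_pos _).le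
      _ = Real.exp (a * lam ^ 2 - lam * t) := by rw [← Real.exp_add]; congr 1; ring
  have hkey : a * lam ^ 2 - lam * t ≤ -t ^ 2 / (4 * a + 2 * t) := by
    have hc4 : (0:ℝ) < 4 * a + 2 * t := by linarith
    have hlam_mul : lam * (2 * a + t) = t := by
      rw [hlam_def]
      exact div_mul_cancel₀ t (ne_of_gt hden)
    have h1 : (lam * (2 * a + t)) ^ 2 = t ^ 2 := by rw [hlam_mul]
    have h2 : (lam * (2 * a + t)) * t = t * t := by rw [hlam_mul]
    rw [le_div_iff₀ hc4]
    nlinarith [h1, h2, mul_nonneg (mul_nonneg (sq_nonneg lam) hden.le) ht.le]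
  have hfinal : 2 * Real.exp (a * lam ^ 2 - lam * t)
      ≤ 2 * Real.exp (-t ^ 2 / (4 * (m:ℝ) * μ + 2 * t)) := by
    apply mul_le_mul_of_nonneg_left _ (by norm_num)
    apply Real.exp_le_exp.mpr
    calc a * lam ^ 2 - lam * t ≤ -t ^ 2 / (4 * a + 2 * t) := hkey
      _ = -t ^ 2 / (4 * (m:ℝ) * μ + 2 * t) := by rw [ha_def]; ring_nf
  have hgoal_eq : (∑ s ∈ Finset.range (m + 1),
      if t < |(s : ℝ) - a| then (D.choose s * (M - D).choose (m - s) : ℝ) / (M.choose m) else 0)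
      = ∑ s ∈ range (m + 1), if t < |(s : ℝ) - a| then p s else 0 := by
    apply Finset.sum_congr rfl
    intro s _
    rw [hp_def]
  rw [hgoal_eq]
  calc (∑ s ∈ range (m + 1), if t < |(s : ℝ) - a| then p s else 0)
      ≤ (∑ s ∈ range (m+1), p s * (Real.exp lam) ^ s) * Real.exp (-(lam * (a + t)))
        + (∑ s ∈ range (m+1), p s * (Real.exp (-lam)) ^ s) * Real.exp (lam * (a - t)) := hsplit
    _ ≤ 2 * Real.exp (a * lam ^ 2 - lam * t) := by linarith
    _ ≤ 2 * Real.exp (-t ^ 2 / (4 * (m:ℝ) * μ + 2 * t)) := hfinal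
end
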